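/- arXiv:1803.05492 — 5 statements merged into one kernel-verified Lean document; each statement's English description precedes it below -/
import Mathlib

section
/- Let f ∈ H²(𝔻) with Taylor coefficients (c_n), so ‖f‖_{H²}² = Σ_{n≥0} |c_n|². For 0 < r < 1 and k ∈ ℕ, define σ_r f(z) = f(rz) and ‖g‖_k := ( (1/k) Σ_{j=0}^{k−1} |g(ω_k^j)|² )^{1/2} with ω_k^j = exp(2πij/k). Then ‖σ_r f‖_k ≤ ‖f‖_{H²} / (1 − r^{2k})^{1/2}. -/
open Complex

/-- Cauchy–Schwarz for tsums over ℕ. -/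
lemma tsum_mul_le_sqrt_mul_sqrt' (f g : ℕ → ℝ) (hf : ∀ n, 0 ≤ f n) (hg : ∀ n, 0 ≤ g n)
    (hf2 : Summable fun n => f n ^ 2) (hg2 : Summable fun n => g n ^ 2) :
    ∑' n, f n * g n ≤ Real.sqrt (∑' n, f n ^ 2) * Real.sqrt (∑' n, g n ^ 2) := by
  have hfg : Summable fun n => f n * g n := by
    refine Summable.of_nonneg_of_le (fun n => mul_nonneg (hf n) (hg n)) (fun n => ?_)
      ((hf2.add hg2).div_const 2)
    nlinarith [sq_nonneg (f n - g n)]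
  refine Summable.tsum_le_of_sum_le hfg fun s => ?_
  calc ∑ n ∈ s, f n * g n
      ≤ Real.sqrt (∑ n ∈ s, f n ^ 2) * Real.sqrt (∑ n ∈ s, g n ^ 2) :=
        Real.sum_mul_le_sqrt_mul_sqrt s f g
    _ ≤ _ := by
        gcongr
        · exact Summable.sum_le_tsum s (fun n _ => sq_nonneg _) hf2
        · exact Summable.sum_le_tsum s (fun n _ => sq_nonneg _) hg2

/-- The `j`-th `k`-th root of unity, `exp(2πij/k)`. -/
noncomputable def unitRoot (k j : ℕ) : ℂ :=
  Complex.exp (2 * (Real.pi : ℂ) * Complex.I * (j : ℂ) / (k : ℂ))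

/-- For `f ∈ H²(𝔻)` with Taylor coefficients `c`, `0 < r < 1` and `k ∈ ℕ`,
the discrete norm of the dilate `σ_r f` satisfies
`‖σ_r f‖_k ≤ ‖f‖_{H²} / (1 - r^{2k})^{1/2}`. -/
theorem dilate_discrete_norm_bound (c : ℕ → ℂ) (hc : Summable fun n => ‖c n‖ ^ 2)
    (f : ℂ → ℂ) (hf : ∀ z : ℂ, ‖z‖ < 1 → HasSum (fun n => c n * z ^ n) (f z))
    (r : ℝ) (hr0 : 0 < r) (hr1 : r < 1) (k : ℕ) (hk : 0 < k) :
    Real.sqrt ((1 / (k : ℝ)) * ∑ j : Fin k, ‖f ((r : ℂ) * unitRoot k j)‖ ^ 2)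
      ≤ Real.sqrt (∑' n, ‖c n‖ ^ 2) / Real.sqrt (1 - r ^ (2 * k)) := by
  haveI : NeZero k := ⟨hk.ne'⟩
  have hk0 : (k : ℝ) ≠ 0 := Nat.cast_ne_zero.mpr hk.ne'
  set ζ : ℂ := Complex.exp (2 * (Real.pi : ℂ) * Complex.I / k) with hζdef
  have hprim : IsPrimitiveRoot ζ k := Complex.isPrimitiveRoot_exp k hk.ne'
  have hζk : ζ ^ k = 1 := hprim.pow_eq_one
  have hζabs : ‖ζ‖ = 1 := by
    rw [hζdef]
    have harg : 2 * (Real.pi : ℂ) * Complex.I / k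
        = ((2 * Real.pi / k : ℝ) : ℂ) * Complex.I := by push_cast; ring
    rw [harg, Complex.norm_exp_ofReal_mul_I]
  have hroot : ∀ j : ℕ, unitRoot k j = ζ ^ j := by
    intro j
    rw [unitRoot, hζdef, ← Complex.exp_nat_mul]
    congr 1; ring
  have hrk : r ^ (2 * k) < 1 := pow_lt_one₀ hr0.le hr1 (by omega)
  have hden : 0 < 1 - r ^ (2 * k) := by linarith
  -- summability basics
  have hcb : Summable fun n => ‖c n‖ * r ^ n := by
    have hgeo : Summable fun n : ℕ => (r ^ n) ^ 2 := by
      have : Summable fun n : ℕ => (r ^ 2) ^ n :=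
        summable_geometric_of_lt_one (by positivity) (by nlinarith)
      simpa [← pow_mul, mul_comm] using this
    refine Summable.of_nonneg_of_le (fun n => mul_nonneg (norm_nonneg _) (by positivity))
      (fun n => ?_) ((hc.add hgeo).div_const 2)
    nlinarith [sq_nonneg (‖c n‖ - r ^ n), norm_nonneg (c n)]
  have hinj : ∀ m : Fin k, Function.Injective fun l : ℕ => l * k + (m : ℕ) := by
    intro m l₁ l₂ h
    simp only [add_left_inj] at h
    exact Nat.eq_of_mul_eq_mul_right hk h
  have hsub : ∀ m : Fin k, Summable fun l : ℕ => ‖c (l * k + (m : ℕ))‖ * r ^ (l * k + (m : ℕ)) :=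
    fun m => hcb.comp_injective (hinj m)
  have hsub2 : ∀ m : Fin k, Summable fun l : ℕ => ‖c (l * k + (m : ℕ))‖ ^ 2 :=
    fun m => hc.comp_injective (hinj m)
  have hnormeq : ∀ (n : ℕ), ‖c n * (r : ℂ) ^ n‖ = ‖c n‖ * r ^ n := by
    intro n
    rw [norm_mul, norm_pow, Complex.norm_real, Real.norm_of_nonneg hr0.le]
  have hsubC : ∀ m : Fin k, Summable fun l : ℕ => c (l * k + (m : ℕ)) * (r : ℂ) ^ (l * k + (m : ℕ)) := by
    intro m
    apply Summable.of_norm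
    simpa only [hnormeq] using hsub m
  -- the polynomial coefficients
  set a : Fin k → ℂ := fun m => ∑' l : ℕ, c (l * k + (m : ℕ)) * (r : ℂ) ^ (l * k + (m : ℕ)) with ha
  -- Step A : value of f at r·ω^j
  have hA : ∀ j : Fin k, f ((r : ℂ) * unitRoot k j)
      = ∑ m : Fin k, a m * (ζ ^ (m : ℕ)) ^ (j : ℕ) := by
    intro j
    have hzabs : ‖(r : ℂ) * unitRoot k j‖ < 1 := by
      rw [hroot, norm_mul, norm_pow, hζabs,
        one_pow, mul_one, Complex.norm_real, Real.norm_of_nonneg hr0.le]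
      exact hr1
    have h0 := hf _ hzabs
    have h1 : HasSum (fun p : ℕ × Fin k =>
        c (p.1 * k + (p.2 : ℕ)) * ((r : ℂ) * unitRoot k (j : ℕ)) ^ (p.1 * k + (p.2 : ℕ)))
        (f ((r : ℂ) * unitRoot k j)) := by
      have := ((Nat.divModEquiv k).symm.hasSum_iff).mpr h0
      simpa [Function.comp_def, Nat.divModEquiv] using this
    have h2 : HasSum (fun p : Fin k × ℕ =>
        c (p.2 * k + (p.1 : ℕ)) * ((r : ℂ) * unitRoot k (j : ℕ)) ^ (p.2 * k + (p.1 : ℕ)))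
        (f ((r : ℂ) * unitRoot k j)) := by
      have := ((Equiv.prodComm (Fin k) ℕ).hasSum_iff).mpr h1
      simpa [Function.comp_def] using this
    have h3 : ∀ m : Fin k, HasSum (fun l : ℕ =>
        c (l * k + (m : ℕ)) * ((r : ℂ) * unitRoot k (j : ℕ)) ^ (l * k + (m : ℕ)))
        (a m * (ζ ^ (m : ℕ)) ^ (j : ℕ)) := by
      intro m
      have hterm : ∀ l : ℕ, c (l * k + (m : ℕ)) * ((r : ℂ) * unitRoot k (j : ℕ)) ^ (l * k + (m : ℕ))
          = (c (l * k + (m : ℕ)) * (r : ℂ) ^ (l * k + (m : ℕ))) * (ζ ^ (m : ℕ)) ^ (j : ℕ) := by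
        intro l
        rw [hroot, mul_pow]
        have hpow : (ζ ^ (j : ℕ)) ^ (l * k + (m : ℕ))
            = (ζ ^ k) ^ ((j : ℕ) * l) * (ζ ^ (m : ℕ)) ^ (j : ℕ) := by
          rw [← pow_mul, ← pow_mul, ← pow_mul, ← pow_add]
          congr 1; ring
        rw [hpow, hζk, one_pow, one_mul]; ring
      simp only [hterm]
      exact ((hsubC m).hasSum).mul_right _
    exact (h2.prod_fiberwise h3).unique (hasSum_fintype _)
  -- orthogonality of roots of unity
  have key : ∀ m m' : Fin k,
      ∑ j : Fin k, (ζ ^ (m : ℕ) * (starRingEnd ℂ) (ζ ^ (m' : ℕ))) ^ (j : ℕ)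
        = if m = m' then (k : ℂ) else 0 := by
    intro m m'
    have habs' : ‖ζ ^ (m' : ℕ)‖ = 1 := by rw [norm_pow, hζabs, one_pow]
    by_cases h : m = m'
    · subst h
      rw [if_pos rfl]
      have h1 : ζ ^ (m : ℕ) * (starRingEnd ℂ) (ζ ^ (m : ℕ)) = 1 := by
        rw [Complex.mul_conj, Complex.normSq_eq_norm_sq, habs']
        norm_num
      simp only [h1, one_pow, Finset.sum_const, Finset.card_univ, Fintype.card_fin,
        nsmul_eq_mul, mul_one]
    · rw [if_neg h]
      have hz' : ζ ^ (m' : ℕ) ≠ 0 := by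
        intro h0; rw [h0] at habs'; simp at habs'
      set x : ℂ := ζ ^ (m : ℕ) * (starRingEnd ℂ) (ζ ^ (m' : ℕ)) with hx
      have hxk : x ^ k = 1 := by
        rw [hx, mul_pow, ← map_pow, ← pow_mul, ← pow_mul, mul_comm (m : ℕ) k,
          mul_comm (m' : ℕ) k, pow_mul, pow_mul, hζk, one_pow, one_pow, map_one, mul_one]
      have hx1 : x ≠ 1 := by
        intro hx1
        have hconj : (starRingEnd ℂ) (ζ ^ (m' : ℕ)) = (ζ ^ (m' : ℕ))⁻¹ :=
          (Complex.inv_eq_conj habs').symm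
        rw [hx, hconj] at hx1
        have heq : ζ ^ (m : ℕ) = ζ ^ (m' : ℕ) := by
          field_simp at hx1
          exact hx1
        exact h (Fin.ext (hprim.pow_inj m.isLt m'.isLt heq))
      rw [Fin.sum_univ_eq_sum_range (fun j => x ^ j) k, geom_sum_eq hx1, hxk]
      simp
  -- Step B : discrete Parseval
  have hmulconj : ∀ z : ℂ, ((‖z‖ ^ 2 : ℝ) : ℂ) = z * (starRingEnd ℂ) z := by
    intro z
    rw [Complex.mul_conj, Complex.normSq_eq_norm_sq]
  have hB : ∑ j : Fin k, ‖∑ m : Fin k, a m * (ζ ^ (m : ℕ)) ^ (j : ℕ)‖ ^ 2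
      = (k : ℝ) * ∑ m : Fin k, ‖a m‖ ^ 2 := by
    have hmain : ∑ j : Fin k, ((∑ m : Fin k, a m * (ζ ^ (m : ℕ)) ^ (j : ℕ))
          * (starRingEnd ℂ) (∑ m : Fin k, a m * (ζ ^ (m : ℕ)) ^ (j : ℕ)))
        = (k : ℂ) * ∑ m : Fin k, a m * (starRingEnd ℂ) (a m) := by
      calc ∑ j : Fin k, ((∑ m : Fin k, a m * (ζ ^ (m : ℕ)) ^ (j : ℕ))
              * (starRingEnd ℂ) (∑ m : Fin k, a m * (ζ ^ (m : ℕ)) ^ (j : ℕ)))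
          = ∑ j : Fin k, ∑ m : Fin k, ∑ m' : Fin k,
              (a m * (starRingEnd ℂ) (a m'))
                * (ζ ^ (m : ℕ) * (starRingEnd ℂ) (ζ ^ (m' : ℕ))) ^ (j : ℕ) := by
            refine Finset.sum_congr rfl fun j _ => ?_
            rw [map_sum, Finset.sum_mul_sum]
            refine Finset.sum_congr rfl fun m _ => Finset.sum_congr rfl fun m' _ => ?_
            rw [map_mul, map_pow, mul_pow]
            ring
        _ = ∑ m : Fin k, ∑ m' : Fin k, (a m * (starRingEnd ℂ) (a m'))
              * ∑ j : Fin k, (ζ ^ (m : ℕ) * (starRingEnd ℂ) (ζ ^ (m' : ℕ))) ^ (j : ℕ) := by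
            rw [Finset.sum_comm]
            refine Finset.sum_congr rfl fun m _ => ?_
            rw [Finset.sum_comm]
            exact Finset.sum_congr rfl fun m' _ => (Finset.mul_sum _ _ _).symm
        _ = ∑ m : Fin k, ∑ m' : Fin k, (a m * (starRingEnd ℂ) (a m'))
              * (if m = m' then (k : ℂ) else 0) := by
            refine Finset.sum_congr rfl fun m _ => Finset.sum_congr rfl fun m' _ => ?_
            rw [key]
        _ = ∑ m : Fin k, (a m * (starRingEnd ℂ) (a m)) * (k : ℂ) := by
            refine Finset.sum_congr rfl fun m _ => ?_
            simp
        _ = (k : ℂ) * ∑ m : Fin k, a m * (starRingEnd ℂ) (a m) := by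
            rw [← Finset.sum_mul, mul_comm]
    have hmain' := hmain
    simp only [← hmulconj] at hmain'
    apply Complex.ofReal_injective
    push_cast
    push_cast at hmain'
    exact hmain'
  -- Step C : bound on the coefficients
  have hgeok : Summable fun l : ℕ => (r ^ (2 * k)) ^ l :=
    summable_geometric_of_lt_one (by positivity) hrk
  have hC : ∀ m : Fin k, ‖a m‖ ^ 2
      ≤ (∑' l : ℕ, ‖c (l * k + (m : ℕ))‖ ^ 2) * (1 - r ^ (2 * k))⁻¹ := by
    intro m
    have hRsq : ∀ l : ℕ, (r ^ (l * k + (m : ℕ))) ^ 2 = (r ^ (2 * k)) ^ l * (r ^ (m : ℕ)) ^ 2 := by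
      intro l
      rw [← pow_mul, ← pow_mul, ← pow_mul, ← pow_add]
      congr 1; ring
    have hRsum : Summable fun l : ℕ => (r ^ (l * k + (m : ℕ))) ^ 2 := by
      simp only [hRsq]
      exact hgeok.mul_right _
    have hRval : ∑' l : ℕ, (r ^ (l * k + (m : ℕ))) ^ 2 ≤ (1 - r ^ (2 * k))⁻¹ := by
      calc ∑' l : ℕ, (r ^ (l * k + (m : ℕ))) ^ 2
          = ∑' l : ℕ, (r ^ (2 * k)) ^ l * (r ^ (m : ℕ)) ^ 2 := tsum_congr hRsq
        _ = (1 - r ^ (2 * k))⁻¹ * (r ^ (m : ℕ)) ^ 2 := by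
            rw [tsum_mul_right, tsum_geometric_of_lt_one (by positivity) hrk]
        _ ≤ (1 - r ^ (2 * k))⁻¹ * 1 := by
            have h1 : (r ^ (m : ℕ)) ^ 2 ≤ 1 := by
              have h0 := pow_le_one₀ hr0.le hr1.le (n := (m : ℕ))
              nlinarith [pow_nonneg hr0.le (m : ℕ)]
            have h2 : (0 : ℝ) ≤ (1 - r ^ (2 * k))⁻¹ := by positivity
            exact mul_le_mul_of_nonneg_left h1 h2
        _ = (1 - r ^ (2 * k))⁻¹ := mul_one _
    have hC0 : (0 : ℝ) ≤ ∑' l : ℕ, ‖c (l * k + (m : ℕ))‖ ^ 2 :=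
      tsum_nonneg fun _ => sq_nonneg _
    have hR0 : (0 : ℝ) ≤ ∑' l : ℕ, (r ^ (l * k + (m : ℕ))) ^ 2 :=
      tsum_nonneg fun _ => sq_nonneg _
    have h1 : ‖a m‖ ≤ ∑' l : ℕ, ‖c (l * k + (m : ℕ))‖ * r ^ (l * k + (m : ℕ)) := by
      rw [ha]
      calc ‖∑' l : ℕ, c (l * k + (m : ℕ)) * (r : ℂ) ^ (l * k + (m : ℕ))‖
          ≤ ∑' l : ℕ, ‖c (l * k + (m : ℕ)) * (r : ℂ) ^ (l * k + (m : ℕ))‖ :=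
            norm_tsum_le_tsum_norm (by simpa only [hnormeq] using hsub m)
        _ = _ := tsum_congr fun l => hnormeq _
    have h2 : ∑' l : ℕ, ‖c (l * k + (m : ℕ))‖ * r ^ (l * k + (m : ℕ))
        ≤ Real.sqrt (∑' l : ℕ, ‖c (l * k + (m : ℕ))‖ ^ 2)
          * Real.sqrt (∑' l : ℕ, (r ^ (l * k + (m : ℕ))) ^ 2) :=
      tsum_mul_le_sqrt_mul_sqrt' _ _ (fun _ => norm_nonneg _) (fun _ => by positivity)
        (hsub2 m) hRsum
    calc ‖a m‖ ^ 2
        ≤ (Real.sqrt (∑' l : ℕ, ‖c (l * k + (m : ℕ))‖ ^ 2)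
            * Real.sqrt (∑' l : ℕ, (r ^ (l * k + (m : ℕ))) ^ 2)) ^ 2 := by
          have := h1.trans h2
          exact pow_le_pow_left₀ (norm_nonneg _) this 2
      _ = (∑' l : ℕ, ‖c (l * k + (m : ℕ))‖ ^ 2) * (∑' l : ℕ, (r ^ (l * k + (m : ℕ))) ^ 2) := by
          rw [← Real.sqrt_mul hC0, Real.sq_sqrt (mul_nonneg hC0 hR0)]
      _ ≤ _ := by gcongr
  -- regroup the full coefficient sum
  have hsplit : ∑ m : Fin k, (∑' l : ℕ, ‖c (l * k + (m : ℕ))‖ ^ 2) = ∑' n, ‖c n‖ ^ 2 := by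
    have h1 : Summable fun p : ℕ × Fin k => ‖c (p.1 * k + (p.2 : ℕ))‖ ^ 2 := by
      have := ((Nat.divModEquiv k).symm.summable_iff).mpr hc
      simpa [Function.comp_def, Nat.divModEquiv] using this
    have h2 : Summable fun p : Fin k × ℕ => ‖c (p.2 * k + (p.1 : ℕ))‖ ^ 2 := by
      have := ((Equiv.prodComm (Fin k) ℕ).summable_iff).mpr h1
      simpa [Function.comp_def] using this
    calc ∑ m : Fin k, (∑' l : ℕ, ‖c (l * k + (m : ℕ))‖ ^ 2)
        = ∑' m : Fin k, ∑' l : ℕ, ‖c (l * k + (m : ℕ))‖ ^ 2 := (tsum_fintype _).symm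
      _ = ∑' p : Fin k × ℕ, ‖c (p.2 * k + (p.1 : ℕ))‖ ^ 2 :=
          (Summable.tsum_prod' h2 fun m => hsub2 m).symm
      _ = ∑' p : ℕ × Fin k, ‖c (p.1 * k + (p.2 : ℕ))‖ ^ 2 := by
          have := (Equiv.prodComm (Fin k) ℕ).tsum_eq
            (fun p : ℕ × Fin k => ‖c (p.1 * k + (p.2 : ℕ))‖ ^ 2)
          simpa using this
      _ = ∑' n, ‖c n‖ ^ 2 := by
          have := ((Nat.divModEquiv k).symm).tsum_eq (fun n => ‖c n‖ ^ 2)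
          simpa [Function.comp_def, Nat.divModEquiv] using this
  -- final assembly
  have hstep : (1 / (k : ℝ)) * ∑ j : Fin k, ‖f ((r : ℂ) * unitRoot k j)‖ ^ 2
      = ∑ m : Fin k, ‖a m‖ ^ 2 := by
    have : ∑ j : Fin k, ‖f ((r : ℂ) * unitRoot k j)‖ ^ 2
        = (k : ℝ) * ∑ m : Fin k, ‖a m‖ ^ 2 := by
      rw [← hB]
      exact Finset.sum_congr rfl fun j _ => by rw [hA j]
    rw [this]
    field_simp
  have hbound : ∑ m : Fin k, ‖a m‖ ^ 2 ≤ (∑' n, ‖c n‖ ^ 2) / (1 - r ^ (2 * k)) := by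
    calc ∑ m : Fin k, ‖a m‖ ^ 2
        ≤ ∑ m : Fin k, (∑' l : ℕ, ‖c (l * k + (m : ℕ))‖ ^ 2) * (1 - r ^ (2 * k))⁻¹ :=
          Finset.sum_le_sum fun m _ => hC m
      _ = (∑ m : Fin k, ∑' l : ℕ, ‖c (l * k + (m : ℕ))‖ ^ 2) * (1 - r ^ (2 * k))⁻¹ :=
          (Finset.sum_mul _ _ _).symm
      _ = (∑' n, ‖c n‖ ^ 2) / (1 - r ^ (2 * k)) := by
          rw [hsplit, div_eq_mul_inv]
  rw [hstep, ← Real.sqrt_div (tsum_nonneg fun _ => sq_nonneg _)]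
  exact Real.sqrt_le_sqrt hbound
end

section
/- For every f ∈ H²(𝔻) and every k ∈ ℕ, ‖σ_{1−1/k} f‖_k ≤ ‖f‖_{H²} / (1 − e^{−2})^{1/2}, where σ_r f(z) = f(rz) and ‖g‖_k = ( (1/k) Σ_{j=0}^{k−1} |g(ω_k^j)|² )^{1/2}. -/
open Complex Finset

lemma tsum_cs (a b : ℕ → ℝ) (ha : ∀ n, 0 ≤ a n) (hb : ∀ n, 0 ≤ b n)
    (hA : Summable fun n => a n ^ 2) (hB : Summable fun n => b n ^ 2) :
    ∑' n, a n * b n ≤ Real.sqrt (∑' n, a n ^ 2) * Real.sqrt (∑' n, b n ^ 2) := by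
  have hab : Summable fun n => a n * b n := by
    refine Summable.of_nonneg_of_le (fun n => mul_nonneg (ha n) (hb n)) (fun n => ?_)
      ((hA.add hB).div_const 2)
    nlinarith [sq_nonneg (a n - b n)]
  refine Summable.tsum_le_of_sum_le hab fun s => ?_
  have h1 := Finset.sum_mul_sq_le_sq_mul_sq s a b
  have h2 : (∑ i ∈ s, a i ^ 2) ≤ ∑' n, a n ^ 2 := Summable.sum_le_tsum s (fun n _ => sq_nonneg _) hA
  have h3 : (∑ i ∈ s, b i ^ 2) ≤ ∑' n, b n ^ 2 := Summable.sum_le_tsum s (fun n _ => sq_nonneg _) hB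
  have h4 : (∑ i ∈ s, a i * b i) ^ 2 ≤ (∑' n, a n ^ 2) * (∑' n, b n ^ 2) := by
    calc (∑ i ∈ s, a i * b i) ^ 2 ≤ (∑ i ∈ s, a i ^ 2) * ∑ i ∈ s, b i ^ 2 := h1
    _ ≤ (∑' n, a n ^ 2) * (∑' n, b n ^ 2) := by
        apply mul_le_mul h2 h3 (Finset.sum_nonneg fun n _ => sq_nonneg _)
        exact le_trans (Finset.sum_nonneg fun n _ => sq_nonneg _) h2
  rw [← Real.sqrt_mul (tsum_nonneg fun n => sq_nonneg _)]
  exact Real.le_sqrt_of_sq_le h4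

lemma regroup {E : Type*} [NormedAddCommGroup E] [CompleteSpace E]
    (k : ℕ) (hk : 0 < k) (u : ℕ → E) (hu : Summable u) :
    ∑' n, u n = ∑ m : Fin k, ∑' l : ℕ, u (l * k + m) := by
  haveI : NeZero k := ⟨hk.ne'⟩
  have hsum : Summable fun p : Fin k × ℕ =>
      u (((Equiv.prodComm (Fin k) ℕ).trans (Nat.divModEquiv k).symm) p) :=
    (Equiv.summable_iff _).2 hu
  calc ∑' n, u n
      = ∑' p : Fin k × ℕ, u (((Equiv.prodComm (Fin k) ℕ).trans (Nat.divModEquiv k).symm) p) :=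
        (Equiv.tsum_eq _ fun n => u n).symm
    _ = ∑' (m : Fin k) (l : ℕ), u (l * k + m) := Summable.tsum_prod hsum
    _ = ∑ m : Fin k, ∑' l : ℕ, u (l * k + m) := tsum_fintype _
open Complex Finset

lemma geom_sum_root (k : ℕ) (x : ℂ) (hx : x ^ k = 1) :
    ∑ j : Fin k, x ^ (j : ℕ) = if x = 1 then (k : ℂ) else 0 := by
  rw [Fin.sum_univ_eq_sum_range]
  split_ifs with h
  · simp [h]
  · rw [geom_sum_eq h, hx, sub_self, zero_div]

lemma parseval (k : ℕ) (hk : 0 < k) (ζ : ℂ) (hζ : IsPrimitiveRoot ζ k) (hζ1 : ‖ζ‖ = 1)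
    (b : Fin k → ℂ) :
    ∑ j : Fin k, Complex.normSq (∑ m : Fin k, ζ ^ ((j : ℕ) * (m : ℕ)) * b m)
      = k * ∑ m : Fin k, Complex.normSq (b m) := by
  have hζk : ζ ^ k = 1 := hζ.pow_eq_one
  have hζ0 : ζ ≠ 0 := by
    intro h; rw [h] at hζ1; simp at hζ1
  have hconj : (starRingEnd ℂ) ζ = ζ ^ (k - 1) := by
    have h1 : ζ * (starRingEnd ℂ) ζ = 1 := by
      rw [Complex.mul_conj]
      norm_cast
      rw [Complex.normSq_eq_norm_sq]
      simp [hζ1]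
    have h2 : ζ * ζ ^ (k - 1) = 1 := by
      rw [← pow_succ', Nat.sub_add_cancel hk]
      exact hζk
    exact mul_left_cancel₀ hζ0 (h1.trans h2.symm)
  have hT : ∀ m m' : Fin k, ∑ j : Fin k, (ζ ^ ((m : ℕ) + (k - 1) * (m' : ℕ))) ^ (j : ℕ)
      = if m = m' then (k : ℂ) else 0 := by
    intro m m'
    rw [geom_sum_root k _ (by rw [← pow_mul, mul_comm, pow_mul, hζk, one_pow])]
    by_cases h : m = m'
    · subst h
      rw [if_pos rfl, if_pos]
      have he : (m : ℕ) + (k - 1) * (m : ℕ) = k * m := by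
        have h1 : (k - 1) * (m : ℕ) = k * m - m := Nat.sub_one_mul k m
        have h2 : (m : ℕ) ≤ k * m := Nat.le_mul_of_pos_left _ hk
        omega
      rw [he, pow_mul, hζk, one_pow]
    · rw [if_neg h, if_neg]
      intro hone
      apply h
      have hdvd : k ∣ (m : ℕ) + (k - 1) * (m' : ℕ) := (hζ.pow_eq_one_iff_dvd _).1 hone
      obtain ⟨t, ht⟩ := hdvd
      have hm := m.is_lt; have hm' := m'.is_lt
      have hz : ((m : ℤ) - (m' : ℤ)) = (k : ℤ) * (t - m') := by
        have hc := congrArg (fun n : ℕ => (n : ℤ)) ht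
        push_cast [Nat.cast_sub (by omega : 1 ≤ k)] at hc
        linear_combination hc
      have : ((m : ℤ) - (m' : ℤ)) = 0 := by
        by_contra hne
        have h1 := Int.le_of_dvd (abs_pos.mpr hne) ((dvd_abs _ _).mpr ⟨t - m', hz⟩)
        have h2 : |(m : ℤ) - (m' : ℤ)| < (k : ℤ) := by
          rw [abs_lt]
          constructor <;> omega
        omega
      exact Fin.ext (by omega)
  have key : ∑ j : Fin k, ((∑ m : Fin k, ζ ^ ((j : ℕ) * (m : ℕ)) * b m) *
      (starRingEnd ℂ) (∑ m : Fin k, ζ ^ ((j : ℕ) * (m : ℕ)) * b m))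
      = (k : ℂ) * ∑ m : Fin k, (b m * (starRingEnd ℂ) (b m)) := by
    calc ∑ j : Fin k, ((∑ m : Fin k, ζ ^ ((j : ℕ) * (m : ℕ)) * b m) *
          (starRingEnd ℂ) (∑ m : Fin k, ζ ^ ((j : ℕ) * (m : ℕ)) * b m))
        = ∑ j : Fin k, ∑ m : Fin k, ∑ m' : Fin k,
            (b m * (starRingEnd ℂ) (b m')) * (ζ ^ ((m : ℕ) + (k-1) * (m' : ℕ))) ^ (j : ℕ) := by
          refine Finset.sum_congr rfl fun j _ => ?_
          rw [map_sum, Finset.sum_mul_sum]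
          refine Finset.sum_congr rfl fun m _ => Finset.sum_congr rfl fun m' _ => ?_
          rw [map_mul, map_pow, hconj, ← pow_mul, ← pow_mul,
            show ((m : ℕ) + (k-1) * (m' : ℕ)) * (j : ℕ)
              = (j : ℕ) * (m : ℕ) + (k-1) * ((j : ℕ) * (m' : ℕ)) by ring, pow_add]
          ring
      _ = ∑ m : Fin k, ∑ m' : Fin k,
            (b m * (starRingEnd ℂ) (b m')) * ∑ j : Fin k,
              (ζ ^ ((m : ℕ) + (k-1) * (m' : ℕ))) ^ (j : ℕ) := by
          rw [Finset.sum_comm]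
          refine Finset.sum_congr rfl fun m _ => ?_
          rw [Finset.sum_comm]
          exact Finset.sum_congr rfl fun m' _ => (Finset.mul_sum _ _ _).symm
      _ = (k : ℂ) * ∑ m : Fin k, (b m * (starRingEnd ℂ) (b m)) := by
          rw [Finset.mul_sum]
          refine Finset.sum_congr rfl fun m _ => ?_
          rw [Finset.sum_congr rfl fun m' _ => by rw [hT m m']]
          simp [mul_ite]
          ring
  rw [Finset.sum_congr rfl (fun j (_ : j ∈ univ) => Complex.mul_conj _),
    Finset.sum_congr rfl (fun m (_ : m ∈ univ) => Complex.mul_conj _)] at key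
  exact_mod_cast key


/-- Uniform upper bound: `‖σ_{1-1/k} f‖_k ≤ ‖f‖_{H²} / (1 - e⁻²)^{1/2}`. -/
theorem dilate_discrete_norm_uniform_bound (c : ℕ → ℂ)
    (hc : Summable fun n => ‖c n‖ ^ 2)
    (f : ℂ → ℂ) (hf : ∀ z : ℂ, ‖z‖ < 1 → HasSum (fun n => c n * z ^ n) (f z))
    (k : ℕ) (hk : 1 ≤ k) :
    Real.sqrt ((1 / (k : ℝ)) * ∑ j : Fin k,
        ‖f (((1 - 1 / (k : ℝ)) : ℂ) * unitRoot k j)‖ ^ 2)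
      ≤ Real.sqrt (∑' n, ‖c n‖ ^ 2) / Real.sqrt (1 - Real.exp (-2)) := by
  have hk0 : 0 < k := hk
  have hkR : (1 : ℝ) ≤ (k : ℝ) := by exact_mod_cast hk
  have hkR0 : (0 : ℝ) < (k : ℝ) := by linarith
  set r : ℝ := 1 - 1 / (k : ℝ) with hrdef
  have hr0 : 0 ≤ r := by
    have : 1 / (k : ℝ) ≤ 1 := by
      rw [div_le_one hkR0]; exact hkR
    simp only [hrdef]; linarith
  have hr1 : r < 1 := by
    have : 0 < 1 / (k : ℝ) := by positivity
    simp only [hrdef]; linarith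
  set ζ : ℂ := Complex.exp (2 * (Real.pi : ℂ) * Complex.I / k) with hζdef
  have hζ : IsPrimitiveRoot ζ k := Complex.isPrimitiveRoot_exp k hk0.ne'
  have hω : ∀ j : ℕ, unitRoot k j = ζ ^ j := by
    intro j
    rw [hζdef, unitRoot, ← Complex.exp_nat_mul]
    congr 1
    ring
  have hζ1 : ‖ζ‖ = 1 := by
    have h := congrArg norm hζ.pow_eq_one
    rw [norm_pow, norm_one] at h
    rcases lt_trichotomy ‖ζ‖ 1 with hlt | heq | hgt
    · exact absurd h (by have := pow_lt_one₀ (norm_nonneg ζ) hlt hk0.ne'; linarith)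
    · exact heq
    · exact absurd h (by have := one_lt_pow₀ hgt hk0.ne'; linarith)
  -- summability of coefficients times r^n
  have hsum_ar : Summable fun n => ‖c n‖ * r ^ n := by
    have hgeo : Summable fun n : ℕ => (r ^ 2) ^ n :=
      summable_geometric_of_lt_one (by positivity) (by nlinarith)
    refine Summable.of_nonneg_of_le (fun n => by positivity) (fun n => ?_)
      ((hc.add hgeo).div_const 2)
    have : (r ^ n) ^ 2 = (r ^ 2) ^ n := by rw [← pow_mul, ← pow_mul, mul_comm]
    nlinarith [sq_nonneg (‖c n‖ - r ^ n), pow_nonneg hr0 n]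
  have hnormz : ∀ j : ℕ, ‖((r : ℂ)) * unitRoot k j‖ = r := by
    intro j
    rw [norm_mul, hω j, norm_pow, hζ1, one_pow, mul_one, Complex.norm_real,
      Real.norm_eq_abs, _root_.abs_of_nonneg hr0]
  set b : Fin k → ℂ := fun m => ∑' l : ℕ, c (l * k + m) * (r : ℂ) ^ (l * k + (m : ℕ)) with hbdef
  have hinj : ∀ m : Fin k, Function.Injective fun l : ℕ => l * k + (m : ℕ) := by
    intro m a a' h
    simp only [add_left_inj] at h
    exact Nat.eq_of_mul_eq_mul_right hk0 h
  -- value of f at the sample points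
  have hfz : ∀ j : Fin k, f ((r : ℂ) * unitRoot k j)
      = ∑ m : Fin k, ζ ^ ((j : ℕ) * (m : ℕ)) * b m := by
    intro j
    set z : ℂ := (r : ℂ) * unitRoot k j with hzdef
    have hznorm : ‖z‖ = r := hnormz j
    have hzsum : Summable fun n => c n * z ^ n := by
      refine Summable.of_norm ?_
      have : ∀ n, ‖c n * z ^ n‖ = ‖c n‖ * r ^ n := by
        intro n; rw [norm_mul, norm_pow, hznorm]
      rw [funext this]
      exact hsum_ar
    have h1 : f z = ∑' n, c n * z ^ n := ((hf z (by rw [hznorm]; exact hr1)).tsum_eq).symm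
    rw [h1, regroup k hk0 _ hzsum]
    refine Finset.sum_congr rfl fun m _ => ?_
    have hzpow : ∀ l : ℕ, z ^ (l * k + (m : ℕ))
        = ζ ^ ((j : ℕ) * (m : ℕ)) * (r : ℂ) ^ (l * k + (m : ℕ)) := by
      intro l
      rw [hzdef, hω j, mul_pow, ← pow_mul,
        show (j : ℕ) * (l * k + (m : ℕ)) = k * ((j : ℕ) * l) + (j : ℕ) * (m : ℕ) by ring,
        pow_add ζ, pow_mul ζ, hζ.pow_eq_one, one_pow, one_mul]
      ring
    calc ∑' l : ℕ, c (l * k + m) * z ^ (l * k + (m : ℕ))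
        = ∑' l : ℕ, ζ ^ ((j : ℕ) * (m : ℕ)) * (c (l * k + m) * (r : ℂ) ^ (l * k + (m : ℕ))) := by
          refine tsum_congr fun l => ?_
          rw [hzpow l]; ring
      _ = ζ ^ ((j : ℕ) * (m : ℕ)) * b m := by rw [tsum_mul_left]
  -- Parseval
  have hpars : ∑ j : Fin k, ‖f ((r : ℂ) * unitRoot k j)‖ ^ 2
      = k * ∑ m : Fin k, ‖b m‖ ^ 2 := by
    have h1 : ∀ j : Fin k, ‖f ((r : ℂ) * unitRoot k j)‖ ^ 2
        = Complex.normSq (∑ m : Fin k, ζ ^ ((j : ℕ) * (m : ℕ)) * b m) := by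
      intro j
      rw [hfz j, Complex.sq_norm]
    rw [Finset.sum_congr rfl fun j _ => h1 j, parseval k hk0 ζ hζ hζ1 b]
    congr 1
    exact Finset.sum_congr rfl fun m _ => by rw [Complex.sq_norm]
  set ρ : ℝ := r ^ 2 with hρdef
  have hρ0 : 0 ≤ ρ := by positivity
  have hρ1 : ρ < 1 := by simp only [hρdef]; nlinarith
  have hρk1 : ρ ^ k < 1 := pow_lt_one₀ hρ0 hρ1 hk0.ne'
  have hposk : (0 : ℝ) < 1 - ρ ^ k := by linarith
  -- bound on each b m
  have hbm : ∀ m : Fin k, ‖b m‖ ^ 2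
      ≤ (∑' l : ℕ, ‖c (l * k + m)‖ ^ 2) * (1 / (1 - ρ ^ k)) := by
    intro m
    have hA : Summable fun l : ℕ => ‖c (l * k + (m : ℕ))‖ ^ 2 := hc.comp_injective (hinj m)
    have hBeq : ∀ l : ℕ, (r ^ (l * k + (m : ℕ))) ^ 2 = ρ ^ (m : ℕ) * (ρ ^ k) ^ l := by
      intro l
      have h1 : (r ^ (l * k + (m : ℕ))) ^ 2 = ρ ^ (l * k + (m : ℕ)) := by
        rw [hρdef, ← pow_mul, ← pow_mul, mul_comm (l * k + (m : ℕ)) 2]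
      rw [h1, pow_add, mul_comm l k, pow_mul]
      ring
    have hB : Summable fun l : ℕ => (r ^ (l * k + (m : ℕ))) ^ 2 := by
      rw [funext hBeq]
      exact (summable_geometric_of_lt_one (by positivity) hρk1).mul_left _
    have hBval : ∑' l : ℕ, (r ^ (l * k + (m : ℕ))) ^ 2 ≤ 1 / (1 - ρ ^ k) := by
      rw [tsum_congr hBeq, tsum_mul_left, tsum_geometric_of_lt_one (by positivity) hρk1]
      rw [one_div]
      have h2 : (0 : ℝ) < 1 - ρ ^ k := by linarith
      have h3 : ρ ^ (m : ℕ) ≤ 1 := pow_le_one₀ hρ0 hρ1.le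
      have h4 : (0 : ℝ) ≤ (1 - ρ ^ k)⁻¹ := by positivity
      nlinarith
    have hnorm1 : ‖b m‖ ≤ ∑' l : ℕ, ‖c (l * k + m)‖ * r ^ (l * k + (m : ℕ)) := by
      have hsn : Summable fun l : ℕ => ‖c (l * k + m) * (r : ℂ) ^ (l * k + (m : ℕ))‖ := by
        have : ∀ l : ℕ, ‖c (l * k + m) * (r : ℂ) ^ (l * k + (m : ℕ))‖
            = ‖c (l * k + m)‖ * r ^ (l * k + (m : ℕ)) := by
          intro l
          rw [norm_mul, norm_pow, Complex.norm_real, Real.norm_eq_abs, _root_.abs_of_nonneg hr0]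
        rw [funext this]
        exact hsum_ar.comp_injective (hinj m)
      refine le_trans (norm_tsum_le_tsum_norm hsn) (le_of_eq ?_)
      refine tsum_congr fun l => ?_
      rw [norm_mul, norm_pow, Complex.norm_real, Real.norm_eq_abs, _root_.abs_of_nonneg hr0]
    have hcs := tsum_cs (fun l => ‖c (l * k + m)‖) (fun l => r ^ (l * k + (m : ℕ)))
      (fun l => norm_nonneg _) (fun l => pow_nonneg hr0 _) hA hB
    have h5 : ‖b m‖ ≤ Real.sqrt (∑' l : ℕ, ‖c (l * k + m)‖ ^ 2) * Real.sqrt (1 / (1 - ρ ^ k)) := by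
      refine le_trans hnorm1 (le_trans hcs ?_)
      exact mul_le_mul_of_nonneg_left (Real.sqrt_le_sqrt hBval) (Real.sqrt_nonneg _)
    calc ‖b m‖ ^ 2 ≤ (Real.sqrt (∑' l : ℕ, ‖c (l * k + m)‖ ^ 2)
          * Real.sqrt (1 / (1 - ρ ^ k))) ^ 2 := by
          exact pow_le_pow_left₀ (norm_nonneg _) h5 2
      _ = (∑' l : ℕ, ‖c (l * k + m)‖ ^ 2) * (1 / (1 - ρ ^ k)) := by
          rw [mul_pow, Real.sq_sqrt (tsum_nonneg fun l => sq_nonneg _),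
            Real.sq_sqrt (one_div_nonneg.mpr hposk.le)]
  -- total coefficient sum
  have htot : ∑ m : Fin k, ∑' l : ℕ, ‖c (l * k + m)‖ ^ 2 = ∑' n, ‖c n‖ ^ 2 :=
    (regroup k hk0 _ hc).symm
  set S : ℝ := ∑' n, ‖c n‖ ^ 2 with hSdef
  have hS0 : 0 ≤ S := tsum_nonneg fun n => sq_nonneg _
  -- numeric bound  ρ^k ≤ exp (-2)
  have hnum : ρ ^ k ≤ Real.exp (-2) := by
    have h1 : r ≤ Real.exp (-(1 / (k : ℝ))) := by
      have := Real.add_one_le_exp (-(1 / (k : ℝ)))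
      simp only [hrdef]; linarith
    have h2 : ρ ^ k = r ^ (2 * k) := by
      rw [hρdef, ← pow_mul]
    have h3 : r ^ (2 * k) ≤ Real.exp (-(1 / (k : ℝ))) ^ (2 * k) :=
      pow_le_pow_left₀ hr0 h1 _
    have h4 : Real.exp (-(1 / (k : ℝ))) ^ (2 * k) = Real.exp (-2) := by
      rw [← Real.exp_nat_mul]
      congr 1
      push_cast
      field_simp
    rw [h2, ← h4] at *
    exact h3
  have hexp1 : Real.exp (-2) < 1 := by
    rw [← Real.exp_zero]
    exact Real.exp_lt_exp.mpr (by norm_num)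
  have hpos2 : (0 : ℝ) < 1 - Real.exp (-2) := by linarith
  -- main chain
  have hmain : (1 / (k : ℝ)) * ∑ j : Fin k, ‖f (((1 - 1 / (k : ℝ)) : ℂ) * unitRoot k j)‖ ^ 2
      ≤ S / (1 - Real.exp (-2)) := by
    have hcast : ((1 - 1 / (k : ℝ)) : ℂ) = ((r : ℝ) : ℂ) := by
      rw [hrdef]; push_cast; ring
    rw [Finset.sum_congr rfl fun j _ => by rw [hcast], hpars]
    rw [← mul_assoc, one_div, inv_mul_cancel₀ (by positivity : (k : ℝ) ≠ 0), one_mul]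
    calc ∑ m : Fin k, ‖b m‖ ^ 2
        ≤ ∑ m : Fin k, (∑' l : ℕ, ‖c (l * k + m)‖ ^ 2) * (1 / (1 - ρ ^ k)) :=
          Finset.sum_le_sum fun m _ => hbm m
      _ = S * (1 / (1 - ρ ^ k)) := by rw [← Finset.sum_mul, htot]
      _ ≤ S * (1 / (1 - Real.exp (-2))) := by
          refine mul_le_mul_of_nonneg_left ?_ hS0
          exact one_div_le_one_div_of_le hpos2 (by linarith)
      _ = S / (1 - Real.exp (-2)) := by ring
  calc Real.sqrt ((1 / (k : ℝ)) * ∑ j : Fin k,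
        ‖f (((1 - 1 / (k : ℝ)) : ℂ) * unitRoot k j)‖ ^ 2)
      ≤ Real.sqrt (S / (1 - Real.exp (-2))) := Real.sqrt_le_sqrt hmain
    _ = Real.sqrt S / Real.sqrt (1 - Real.exp (-2)) := Real.sqrt_div hS0 _
end

section
/- For every f ∈ H²(𝔻), ‖f‖_{H²} ≤ sup_{k∈ℕ} ‖σ_{1−1/k} f‖_k ≤ ‖f‖_{H²} / (1 − e^{−2})^{1/2}, where σ_r f(z) = f(rz) and ‖g‖_k = ( (1/k) Σ_{j=0}^{k−1} |g(exp(2πij/k))|² )^{1/2}. -/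
open Complex

lemma unitRoot_eq_pow (m j : ℕ) : unitRoot m j = unitRoot m 1 ^ j := by
  unfold unitRoot
  rw [← Complex.exp_nat_mul]
  congr 1
  push_cast
  ring

lemma norm_unitRoot (m j : ℕ) : ‖unitRoot m j‖ = 1 := by
  unfold unitRoot
  have h : 2 * (Real.pi : ℂ) * Complex.I * (j : ℂ) / (m : ℂ)
      = ((2 * Real.pi * j / m : ℝ) : ℂ) * Complex.I := by push_cast; ring
  rw [h]
  simpa using Complex.norm_exp_ofReal_mul_I (2 * Real.pi * j / m)

lemma unitRoot_ne_zero (m j : ℕ) : unitRoot m j ≠ 0 := Complex.exp_ne_zero _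

lemma isPrimitiveRoot_unitRoot (m : ℕ) (hm : m ≠ 0) : IsPrimitiveRoot (unitRoot m 1) m := by
  have h := Complex.isPrimitiveRoot_exp m hm
  have : unitRoot m 1 = Complex.exp (2 * (Real.pi:ℂ) * Complex.I / m) := by
    unfold unitRoot; norm_num
  rwa [this]

lemma parseval_s7 (m : ℕ) (hm : m ≠ 0) (A : Fin m → ℂ) :
    (1 / (m:ℝ)) * ∑ j : Fin m, ‖∑ s : Fin m, A s * unitRoot m 1 ^ ((j:ℕ) * (s:ℕ))‖ ^ 2
      = ∑ s : Fin m, ‖A s‖ ^ 2 := by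
  set ω := unitRoot m 1 with hω
  have hprim := isPrimitiveRoot_unitRoot m hm
  have hωm : ω ^ m = 1 := hprim.pow_eq_one
  have hω1 : ‖ω‖ = 1 := norm_unitRoot m 1
  have hω0 : ω ≠ 0 := unitRoot_ne_zero m 1
  have hconj : (starRingEnd ℂ) ω = ω⁻¹ := (Complex.inv_eq_conj hω1).symm
  have horth : ∀ s s' : Fin m,
      ∑ j ∈ Finset.range m, (ω ^ (s:ℕ) * ((starRingEnd ℂ) ω) ^ (s':ℕ)) ^ j
        = if s = s' then (m:ℂ) else 0 := by
    intro s s'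
    by_cases h : s = s'
    · subst h
      have h1 : ω ^ (s:ℕ) * ((starRingEnd ℂ) ω) ^ (s:ℕ) = 1 := by
        rw [hconj, inv_pow, mul_inv_cancel₀ (pow_ne_zero _ hω0)]
      simp [h1]
    · have hpow : ∀ i : ℕ, ω ^ (i * m) = 1 := fun i => by
        rw [mul_comm, pow_mul, hωm, one_pow]
      have hζ1 : ω ^ (s:ℕ) * ((starRingEnd ℂ) ω) ^ (s':ℕ) ≠ 1 := by
        rw [hconj, inv_pow]
        intro hcon
        rw [mul_inv_eq_one₀ (pow_ne_zero _ hω0)] at hcon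
        exact h (Fin.ext (hprim.pow_inj s.isLt s'.isLt hcon))
      have hζm : (ω ^ (s:ℕ) * ((starRingEnd ℂ) ω) ^ (s':ℕ)) ^ m = 1 := by
        rw [hconj, inv_pow, mul_pow, ← pow_mul, inv_pow, ← pow_mul, hpow, hpow,
          inv_one, mul_one]
      rw [geom_sum_eq hζ1, hζm]
      simp [h]
  have expand : ∀ j : Fin m,
      (∑ s : Fin m, A s * ω ^ ((j:ℕ)*(s:ℕ))) *
        (starRingEnd ℂ) (∑ s : Fin m, A s * ω ^ ((j:ℕ)*(s:ℕ)))
      = ∑ s : Fin m, ∑ s' : Fin m,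
          (A s * (starRingEnd ℂ) (A s')) *
            (ω ^ (s:ℕ) * ((starRingEnd ℂ) ω) ^ ((s':ℕ))) ^ (j:ℕ) := by
    intro j
    rw [map_sum, Finset.sum_mul_sum]
    refine Finset.sum_congr rfl fun s _ => Finset.sum_congr rfl fun s' _ => ?_
    rw [map_mul, map_pow]
    rw [mul_comm (j:ℕ) (s:ℕ), mul_comm (j:ℕ) (s':ℕ), pow_mul, pow_mul, mul_pow]
    ring
  have key : ∑ j : Fin m, ‖∑ s : Fin m, A s * ω ^ ((j:ℕ)*(s:ℕ))‖ ^ 2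
      = (m:ℝ) * ∑ s : Fin m, ‖A s‖ ^ 2 := by
    have keyC : ((∑ j : Fin m, ‖∑ s : Fin m, A s * ω ^ ((j:ℕ)*(s:ℕ))‖ ^ 2 : ℝ) : ℂ)
        = (((m:ℝ) * ∑ s : Fin m, ‖A s‖ ^ 2 : ℝ) : ℂ) := by
      push_cast
      calc ∑ j : Fin m, (‖∑ s : Fin m, A s * ω ^ ((j:ℕ)*(s:ℕ))‖ : ℂ) ^ 2
          = ∑ j : Fin m, (∑ s : Fin m, A s * ω ^ ((j:ℕ)*(s:ℕ))) *
              (starRingEnd ℂ) (∑ s : Fin m, A s * ω ^ ((j:ℕ)*(s:ℕ))) := by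
            refine Finset.sum_congr rfl fun j _ => ?_
            rw [Complex.mul_conj']
        _ = ∑ j : Fin m, ∑ s : Fin m, ∑ s' : Fin m,
              (A s * (starRingEnd ℂ) (A s')) *
                (ω ^ (s:ℕ) * ((starRingEnd ℂ) ω) ^ ((s':ℕ))) ^ (j:ℕ) := by
            simp only [expand]
        _ = ∑ s : Fin m, ∑ s' : Fin m,
              (A s * (starRingEnd ℂ) (A s')) *
                ∑ j ∈ Finset.range m, (ω ^ (s:ℕ) * ((starRingEnd ℂ) ω) ^ ((s':ℕ))) ^ j := by
            rw [Finset.sum_comm]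
            refine Finset.sum_congr rfl fun s _ => ?_
            rw [Finset.sum_comm]
            refine Finset.sum_congr rfl fun s' _ => ?_
            rw [Fin.sum_univ_eq_sum_range
              (fun j => (A s * (starRingEnd ℂ) (A s')) *
                (ω ^ (s:ℕ) * ((starRingEnd ℂ) ω) ^ ((s':ℕ))) ^ j) m, ← Finset.mul_sum]
        _ = ∑ s : Fin m, (A s * (starRingEnd ℂ) (A s)) * (m:ℂ) := by
            refine Finset.sum_congr rfl fun s _ => ?_
            simp only [horth, mul_ite, mul_zero]
            rw [Finset.sum_ite_eq]
            simp
        _ = (m:ℂ) * ∑ s : Fin m, (‖A s‖ : ℂ) ^ 2 := by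
            rw [← Finset.sum_mul, mul_comm]
            congr 1
            exact Finset.sum_congr rfl fun s _ => Complex.mul_conj' (A s)
    exact_mod_cast keyC
  rw [key]
  have : (m:ℝ) ≠ 0 := Nat.cast_ne_zero.mpr hm
  field_simp


section
variable {E : Type*} [AddCommGroup E] [UniformSpace E] [IsUniformAddGroup E]
  [CompleteSpace E] [T2Space E]

lemma slice_summable (m : ℕ) (hm : m ≠ 0) (g : ℕ → E) (hg : Summable g) (s : Fin m) :
    Summable fun t : ℕ => g (t * m + s) := by
  have hmpos : 0 < m := Nat.pos_of_ne_zero hm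
  apply hg.comp_injective
  intro a b hab
  simp only [Function.comp] at hab
  have h2 := Nat.add_right_cancel hab
  exact Nat.eq_of_mul_eq_mul_right hmpos h2

lemma tsum_reindex (m : ℕ) (hm : m ≠ 0) (g : ℕ → E) (hg : Summable g) :
    ∑' n, g n = ∑ s : Fin m, ∑' t : ℕ, g (t * m + s) := by
  haveI : NeZero m := ⟨hm⟩
  have h1 : ∑' p : ℕ × Fin m, g (p.1 * m + p.2) = ∑' n, g n := by
    rw [← (Nat.divModEquiv m).symm.tsum_eq g]
    rfl
  rw [← h1]
  have hg' : Summable fun p : ℕ × Fin m => g (p.1 * m + p.2) :=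
    (Nat.divModEquiv m).symm.summable_iff.mpr hg
  rw [Summable.tsum_prod hg']
  calc ∑' (b : ℕ) (c : Fin m), g (b * m + ↑c)
      = ∑' b : ℕ, ∑ c : Fin m, g (b * m + ↑c) := tsum_congr fun b => tsum_fintype _
    _ = ∑ s : Fin m, ∑' t : ℕ, g (t * m + ↑s) :=
        Summable.tsum_finsetSum (fun s _ => slice_summable m hm g hg s)
end

lemma tsum_cauchy_schwarz (u v : ℕ → ℝ) (hu0 : ∀ n, 0 ≤ u n) (hv0 : ∀ n, 0 ≤ v n)
    (hu : Summable fun n => u n ^ 2) (hv : Summable fun n => v n ^ 2) :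
    (∑' n, u n * v n) ^ 2 ≤ (∑' n, u n ^ 2) * (∑' n, v n ^ 2) := by
  have huv : Summable fun n => u n * v n := by
    apply Summable.of_nonneg_of_le (fun n => mul_nonneg (hu0 n) (hv0 n))
      (fun n => ?_) ((hu.add hv).div_const 2)
    have := sq_nonneg (u n - v n)
    nlinarith
  have hU : 0 ≤ ∑' n, u n ^ 2 := tsum_nonneg fun n => sq_nonneg _
  have hV : 0 ≤ ∑' n, v n ^ 2 := tsum_nonneg fun n => sq_nonneg _
  have hle : ∑' n, u n * v n ≤ Real.sqrt (∑' n, u n ^ 2) * Real.sqrt (∑' n, v n ^ 2) := by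
    apply Summable.tsum_le_of_sum_le huv
    intro F
    have h1 : (∑ i ∈ F, u i * v i) ^ 2 ≤ (∑ i ∈ F, u i ^ 2) * (∑ i ∈ F, v i ^ 2) :=
      Finset.sum_mul_sq_le_sq_mul_sq F u v
    have h2 : ∑ i ∈ F, u i * v i ≤ Real.sqrt ((∑ i ∈ F, u i ^ 2) * (∑ i ∈ F, v i ^ 2)) := by
      rw [← Real.sqrt_sq (Finset.sum_nonneg fun i _ => mul_nonneg (hu0 i) (hv0 i))]
      exact Real.sqrt_le_sqrt h1
    refine h2.trans ?_
    rw [Real.sqrt_mul (Finset.sum_nonneg fun i _ => sq_nonneg _)]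
    gcongr
    · exact Summable.sum_le_tsum F (fun i _ => sq_nonneg _) hu
    · exact Summable.sum_le_tsum F (fun i _ => sq_nonneg _) hv
  calc (∑' n, u n * v n) ^ 2
      ≤ (Real.sqrt (∑' n, u n ^ 2) * Real.sqrt (∑' n, v n ^ 2)) ^ 2 := by
        apply pow_le_pow_left₀ (tsum_nonneg fun n => mul_nonneg (hu0 n) (hv0 n)) hle
    _ = (∑' n, u n ^ 2) * (∑' n, v n ^ 2) := by
        rw [mul_pow, Real.sq_sqrt hU, Real.sq_sqrt hV]

lemma summable_coef (c : ℕ → ℂ) (hc : Summable fun n => ‖c n‖ ^ 2) {ρ : ℝ}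
    (h0 : 0 ≤ ρ) (h1 : ρ < 1) : Summable fun n => ‖c n‖ * ρ ^ n := by
  apply Summable.of_nonneg_of_le (fun n => mul_nonneg (norm_nonneg _) (pow_nonneg h0 n))
    (fun n => ?_) ((summable_geometric_of_lt_one h0 h1).add hc)
  have hp0 : 0 ≤ ρ ^ n := pow_nonneg h0 n
  have hp1 : ρ ^ n ≤ 1 := pow_le_one₀ h0 h1.le
  have hx : 0 ≤ ‖c n‖ := norm_nonneg _
  nlinarith [sq_nonneg (‖c n‖ - 1), mul_nonneg hp0 hx]

lemma discrete_eq (c : ℕ → ℂ) (hc : Summable fun n => ‖c n‖ ^ 2)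
    (f : ℂ → ℂ) (hf : ∀ z : ℂ, ‖z‖ < 1 → HasSum (fun n => c n * z ^ n) (f z))
    (m : ℕ) (hm : m ≠ 0) {ρ : ℝ} (h0 : 0 ≤ ρ) (h1 : ρ < 1) :
    (1 / (m:ℝ)) * ∑ j : Fin m, ‖f ((ρ:ℂ) * unitRoot m j)‖ ^ 2
      = ∑ s : Fin m, ‖∑' t : ℕ, c (t * m + s) * (ρ:ℂ) ^ (t * m + (s:ℕ))‖ ^ 2 := by
  have hωm : unitRoot m 1 ^ m = 1 := (isPrimitiveRoot_unitRoot m hm).pow_eq_one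
  have step : ∀ j : Fin m, f ((ρ:ℂ) * unitRoot m j)
      = ∑ s : Fin m, (∑' t : ℕ, c (t * m + s) * (ρ:ℂ) ^ (t * m + (s:ℕ)))
          * unitRoot m 1 ^ ((j:ℕ) * (s:ℕ)) := by
    intro j
    set z := (ρ:ℂ) * unitRoot m j with hz
    have hznorm : ‖z‖ < 1 := by
      rw [hz, norm_mul, norm_unitRoot, mul_one, Complex.norm_real]
      rwa [Real.norm_eq_abs, _root_.abs_of_nonneg h0]
    have hgsum : Summable fun n => c n * z ^ n := by
      apply Summable.of_norm
      have : ∀ n, ‖c n * z ^ n‖ = ‖c n‖ * ‖z‖ ^ n := by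
        intro n; rw [norm_mul, norm_pow]
      simp only [this]
      have h0' : (0:ℝ) ≤ ‖z‖ := norm_nonneg _
      exact summable_coef c hc h0' hznorm
    have hfz : f z = ∑' n, c n * z ^ n := (hf z hznorm).tsum_eq.symm
    rw [hfz, tsum_reindex m hm _ hgsum]
    refine Finset.sum_congr rfl fun s _ => ?_
    have hterm : ∀ t : ℕ, c (t * m + s) * z ^ (t * m + (s:ℕ))
        = (c (t * m + s) * (ρ:ℂ) ^ (t * m + (s:ℕ))) * unitRoot m 1 ^ ((j:ℕ) * (s:ℕ)) := by
      intro t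
      rw [hz, mul_pow, unitRoot_eq_pow m j, ← pow_mul]
      have h2 : unitRoot m 1 ^ ((j:ℕ) * (t * m + (s:ℕ))) = unitRoot m 1 ^ ((j:ℕ) * (s:ℕ)) := by
        have h3 : (j:ℕ) * (t * m + (s:ℕ)) = (j:ℕ) * t * m + (j:ℕ) * (s:ℕ) := by ring
        rw [h3, pow_add, pow_mul', hωm, one_pow, one_mul]
      rw [h2]; ring
    simp only [hterm]
    rw [tsum_mul_right]
  simp only [step]
  exact parseval_s7 m hm _

lemma cs_general (c : ℕ → ℂ) (hc : Summable fun n => ‖c n‖ ^ 2) {ρ : ℝ}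
    (h0 : 0 ≤ ρ) (h1 : ρ < 1) (e : ℕ → ℕ) (he : Function.Injective e) :
    ‖∑' t : ℕ, c (e t) * (ρ:ℂ) ^ (e t)‖ ^ 2
      ≤ (∑' t : ℕ, (ρ^2) ^ (e t)) * ∑' t : ℕ, ‖c (e t)‖ ^ 2 := by
  have hq0 : (0:ℝ) ≤ ρ^2 := sq_nonneg ρ
  have hq1 : ρ^2 < 1 := by nlinarith
  have hnorm : ∀ t, ‖c (e t) * (ρ:ℂ) ^ (e t)‖ = ‖c (e t)‖ * ρ ^ (e t) := by
    intro t
    rw [norm_mul, norm_pow, Complex.norm_real, Real.norm_eq_abs, _root_.abs_of_nonneg h0]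
  have hsum_norm : Summable fun t => ‖c (e t)‖ * ρ ^ (e t) :=
    (summable_coef c hc h0 h1).comp_injective he
  have hu : Summable fun t => ‖c (e t)‖ ^ 2 := hc.comp_injective he
  have hv : Summable fun t => ((ρ^2) ^ (e t)) :=
    (summable_geometric_of_lt_one hq0 hq1).comp_injective he
  have h1' : ‖∑' t : ℕ, c (e t) * (ρ:ℂ) ^ (e t)‖ ≤ ∑' t, ‖c (e t)‖ * ρ ^ (e t) := by
    calc ‖∑' t : ℕ, c (e t) * (ρ:ℂ) ^ (e t)‖ ≤ ∑' t, ‖c (e t) * (ρ:ℂ) ^ (e t)‖ :=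
          norm_tsum_le_tsum_norm (by simpa only [hnorm] using hsum_norm)
      _ = ∑' t, ‖c (e t)‖ * ρ ^ (e t) := tsum_congr fun t => hnorm t
  have hCS := tsum_cauchy_schwarz (fun t => ‖c (e t)‖) (fun t => ρ ^ (e t))
    (fun t => norm_nonneg _) (fun t => pow_nonneg h0 _) hu (by
      have : ∀ t, (ρ ^ (e t)) ^ 2 = (ρ^2) ^ (e t) := fun t => by
        rw [← pow_mul, ← pow_mul, Nat.mul_comm]
      simpa only [this] using hv)
  have hsq : ∀ t, (ρ ^ (e t)) ^ 2 = (ρ^2) ^ (e t) := fun t => by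
    rw [← pow_mul, ← pow_mul, Nat.mul_comm]
  calc ‖∑' t : ℕ, c (e t) * (ρ:ℂ) ^ (e t)‖ ^ 2
      ≤ (∑' t, ‖c (e t)‖ * ρ ^ (e t)) ^ 2 := by
        apply pow_le_pow_left₀ (norm_nonneg _) h1'
    _ ≤ (∑' t, ‖c (e t)‖ ^ 2) * (∑' t, (ρ ^ (e t)) ^ 2) := hCS
    _ = (∑' t : ℕ, (ρ^2) ^ (e t)) * ∑' t : ℕ, ‖c (e t)‖ ^ 2 := by
        rw [mul_comm]; congr 1; exact tsum_congr fun t => hsq t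
    
lemma geom_slice (q : ℝ) (hq0 : 0 ≤ q) (hq1 : q < 1) (m : ℕ) (hm : m ≠ 0) (b s : ℕ) :
    ∑' t : ℕ, q ^ ((t + b) * m + s) ≤ (1 - q ^ m)⁻¹ := by
  have hqm : q ^ m < 1 := pow_lt_one₀ hq0 hq1 hm
  have hqm0 : 0 ≤ q ^ m := pow_nonneg hq0 m
  have hterm : ∀ t : ℕ, q ^ ((t + b) * m + s) = q ^ (b * m + s) * (q ^ m) ^ t := by
    intro t
    rw [← pow_mul, ← pow_add]
    congr 1
    ring
  calc ∑' t : ℕ, q ^ ((t + b) * m + s)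
      = q ^ (b * m + s) * ∑' t : ℕ, (q ^ m) ^ t := by
        rw [← tsum_mul_left]
        exact tsum_congr hterm
    _ = q ^ (b * m + s) * (1 - q ^ m)⁻¹ := by rw [tsum_geometric_of_lt_one hqm0 hqm]
    _ ≤ 1 * (1 - q ^ m)⁻¹ := by
        apply mul_le_mul_of_nonneg_right (pow_le_one₀ hq0 hq1.le)
        rw [inv_nonneg]
        linarith
    _ = (1 - q ^ m)⁻¹ := one_mul _

lemma rho_pow_le (m : ℕ) (hm : m ≠ 0) : (1 - 1/(m:ℝ)) ^ (2*m) ≤ Real.exp (-2) := by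
  have hmpos : (0:ℝ) < m := by exact_mod_cast Nat.pos_of_ne_zero hm
  have h1 : 1 - 1/(m:ℝ) ≤ Real.exp (-(1/m)) := by
    have := Real.add_one_le_exp (-(1/(m:ℝ)))
    linarith
  have h0 : 0 ≤ 1 - 1/(m:ℝ) := by
    rw [sub_nonneg, div_le_one hmpos]
    exact_mod_cast Nat.one_le_iff_ne_zero.mpr hm
  calc (1 - 1/(m:ℝ)) ^ (2*m) ≤ Real.exp (-(1/m)) ^ (2*m) := pow_le_pow_left₀ h0 h1 _
    _ = Real.exp (-2) := by
        rw [← Real.exp_nat_mul]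
        congr 1
        push_cast
        field_simp

lemma injective_slice (m : ℕ) (hm : m ≠ 0) (b : ℕ) (s : ℕ) :
    Function.Injective (fun t : ℕ => (t + b) * m + s) := by
  have hmpos : 0 < m := Nat.pos_of_ne_zero hm
  intro x y hxy
  simp only at hxy
  have := Nat.add_right_cancel hxy
  have := Nat.eq_of_mul_eq_mul_right hmpos this
  omega

lemma sq_lt_one {ρ : ℝ} (h0 : 0 ≤ ρ) (h1 : ρ < 1) : ρ ^ 2 < 1 := by nlinarith

lemma discrete_le (c : ℕ → ℂ) (hc : Summable fun n => ‖c n‖ ^ 2)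
    (m : ℕ) (hm : m ≠ 0) {ρ : ℝ} (h0 : 0 ≤ ρ) (h1 : ρ < 1) :
    ∑ s : Fin m, ‖∑' t : ℕ, c (t * m + s) * (ρ:ℂ) ^ (t * m + (s:ℕ))‖ ^ 2
      ≤ (1 - ρ ^ (2*m))⁻¹ * ∑' n, ‖c n‖ ^ 2 := by
  have key : ∀ s : Fin m, ‖∑' t : ℕ, c (t * m + s) * (ρ:ℂ) ^ (t * m + (s:ℕ))‖ ^ 2
      ≤ (1 - ρ ^ (2*m))⁻¹ * ∑' t : ℕ, ‖c (t * m + s)‖ ^ 2 := by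
    intro s
    have he : Function.Injective (fun t : ℕ => t * m + (s:ℕ)) := by
      have := injective_slice m hm 0 s
      simpa using this
    have h := cs_general c hc h0 h1 (fun t => t * m + (s:ℕ)) he
    refine h.trans ?_
    apply mul_le_mul_of_nonneg_right _ (tsum_nonneg fun t => sq_nonneg _)
    have hg := geom_slice (ρ^2) (sq_nonneg ρ) (sq_lt_one h0 h1) m hm 0 s
    simp only [Nat.add_zero] at hg
    calc ∑' t : ℕ, (ρ^2) ^ (t * m + (s:ℕ)) ≤ (1 - (ρ^2) ^ m)⁻¹ := hg
      _ = (1 - ρ ^ (2*m))⁻¹ := by rw [← pow_mul, Nat.mul_comm]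
  calc ∑ s : Fin m, ‖∑' t : ℕ, c (t * m + s) * (ρ:ℂ) ^ (t * m + (s:ℕ))‖ ^ 2
      ≤ ∑ s : Fin m, (1 - ρ ^ (2*m))⁻¹ * ∑' t : ℕ, ‖c (t * m + s)‖ ^ 2 :=
        Finset.sum_le_sum fun s _ => key s
    _ = (1 - ρ ^ (2*m))⁻¹ * ∑' n, ‖c n‖ ^ 2 := by
        rw [← Finset.mul_sum, tsum_reindex m hm (fun n => ‖c n‖ ^ 2) hc]

lemma tail_eq (c : ℕ → ℂ) (hc : Summable fun n => ‖c n‖ ^ 2) (m : ℕ) (hm : m ≠ 0) :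
    ∑ s : Fin m, ∑' t : ℕ, ‖c ((t+1) * m + s)‖ ^ 2
      = (∑' n, ‖c n‖ ^ 2) - ∑ i ∈ Finset.range m, ‖c i‖ ^ 2 := by
  have hsplit : ∀ s : Fin m, ∑' t : ℕ, ‖c (t * m + s)‖ ^ 2
      = ‖c s‖ ^ 2 + ∑' t : ℕ, ‖c ((t+1) * m + s)‖ ^ 2 := by
    intro s
    have h := Summable.tsum_eq_zero_add (slice_summable m hm (fun n => ‖c n‖ ^ 2) hc s)
    simpa using h
  have h2 := tsum_reindex m hm (fun n => ‖c n‖ ^ 2) hc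
  rw [h2, Finset.sum_congr rfl fun s _ => hsplit s, Finset.sum_add_distrib]
  rw [Fin.sum_univ_eq_sum_range (fun i => ‖c i‖ ^ 2) m]
  ring

lemma discrete_ge (c : ℕ → ℂ) (hc : Summable fun n => ‖c n‖ ^ 2)
    (m : ℕ) (hm : m ≠ 0) {ρ : ℝ} (h0 : 0 ≤ ρ) (h1 : ρ < 1) (N : ℕ) (hN : N ≤ m) :
    ρ ^ N * Real.sqrt (∑ n ∈ Finset.range N, ‖c n‖ ^ 2)
      - Real.sqrt ((1 - ρ ^ (2*m))⁻¹ *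
          ((∑' n, ‖c n‖ ^ 2) - ∑ i ∈ Finset.range m, ‖c i‖ ^ 2))
    ≤ Real.sqrt (∑ s : Fin m, ‖∑' t : ℕ, c (t * m + s) * (ρ:ℂ) ^ (t * m + (s:ℕ))‖ ^ 2) := by
  classical
  set u : EuclideanSpace ℂ (Fin m) := WithLp.toLp 2 (fun s => c s * (ρ:ℂ) ^ (s:ℕ)) with hu
  set v : EuclideanSpace ℂ (Fin m) :=
    WithLp.toLp 2 (fun s => ∑' t : ℕ, c ((t+1) * m + s) * (ρ:ℂ) ^ ((t+1) * m + (s:ℕ))) with hv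
  have hslice : ∀ s : Fin m, Summable fun t : ℕ => c (t * m + s) * (ρ:ℂ) ^ (t * m + (s:ℕ)) := by
    intro s
    apply Summable.of_norm
    have hnorm : ∀ t : ℕ, ‖c (t * m + s) * (ρ:ℂ) ^ (t * m + (s:ℕ))‖
        = ‖c (t * m + (s:ℕ))‖ * ρ ^ (t * m + (s:ℕ)) := by
      intro t
      rw [norm_mul, norm_pow, Complex.norm_real, Real.norm_eq_abs, _root_.abs_of_nonneg h0]
    simp only [hnorm]
    exact slice_summable m hm (fun n => ‖c n‖ * ρ ^ n) (summable_coef c hc h0 h1) s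
  have hA : ∀ s : Fin m, ∑' t : ℕ, c (t * m + s) * (ρ:ℂ) ^ (t * m + (s:ℕ)) = u s + v s := by
    intro s
    have h := Summable.tsum_eq_zero_add (hslice s)
    simpa using h
  have hnorm_uv : Real.sqrt (∑ s : Fin m,
      ‖∑' t : ℕ, c (t * m + s) * (ρ:ℂ) ^ (t * m + (s:ℕ))‖ ^ 2) = ‖u + v‖ := by
    rw [EuclideanSpace.norm_eq]
    congr 1
    exact Finset.sum_congr rfl fun s _ => by rw [hA s]; rfl
  rw [hnorm_uv]
  have htri : ‖u‖ - ‖v‖ ≤ ‖u + v‖ := by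
    have := norm_sub_norm_le u (-v)
    simpa [sub_neg_eq_add] using this
  have hu_lb : ρ ^ N * Real.sqrt (∑ n ∈ Finset.range N, ‖c n‖ ^ 2) ≤ ‖u‖ := by
    rw [EuclideanSpace.norm_eq]
    have h1' : ∀ s : Fin m, ‖u s‖ ^ 2 = ‖c s‖ ^ 2 * (ρ^2) ^ (s:ℕ) := by
      intro s
      rw [hu]
      show ‖c s * (ρ:ℂ) ^ (s:ℕ)‖ ^ 2 = _
      rw [norm_mul, norm_pow, Complex.norm_real, Real.norm_eq_abs, _root_.abs_of_nonneg h0,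
        mul_pow, ← pow_mul, ← pow_mul, Nat.mul_comm]
    have hsum_eq : ∑ s : Fin m, ‖u s‖ ^ 2 = ∑ i ∈ Finset.range m, ‖c i‖ ^ 2 * (ρ^2) ^ i := by
      rw [Finset.sum_congr rfl fun s _ => h1' s]
      exact Fin.sum_univ_eq_sum_range (fun i => ‖c i‖ ^ 2 * (ρ^2) ^ i) m
    rw [hsum_eq]
    have hstep : (ρ^2) ^ N * ∑ n ∈ Finset.range N, ‖c n‖ ^ 2
        ≤ ∑ i ∈ Finset.range m, ‖c i‖ ^ 2 * (ρ^2) ^ i := by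
      calc (ρ^2) ^ N * ∑ n ∈ Finset.range N, ‖c n‖ ^ 2
          = ∑ n ∈ Finset.range N, ‖c n‖ ^ 2 * (ρ^2) ^ N := by rw [Finset.mul_sum]; congr 1; ext n; ring
        _ ≤ ∑ n ∈ Finset.range N, ‖c n‖ ^ 2 * (ρ^2) ^ n := by
            apply Finset.sum_le_sum
            intro i hi
            apply mul_le_mul_of_nonneg_left _ (sq_nonneg _)
            apply pow_le_pow_of_le_one (sq_nonneg ρ) (sq_lt_one h0 h1).le
            have := Finset.mem_range.mp hi
            omega
        _ ≤ ∑ i ∈ Finset.range m, ‖c i‖ ^ 2 * (ρ^2) ^ i := by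
            apply Finset.sum_le_sum_of_subset_of_nonneg
              (Finset.range_subset_range.mpr hN)
            intro i _ _
            positivity
    calc ρ ^ N * Real.sqrt (∑ n ∈ Finset.range N, ‖c n‖ ^ 2)
        = Real.sqrt ((ρ^2) ^ N * ∑ n ∈ Finset.range N, ‖c n‖ ^ 2) := by
          rw [Real.sqrt_mul (pow_nonneg (sq_nonneg ρ) N)]
          congr 1
          rw [← pow_mul, Nat.mul_comm, pow_mul, Real.sqrt_sq (pow_nonneg h0 N)]
      _ ≤ Real.sqrt (∑ i ∈ Finset.range m, ‖c i‖ ^ 2 * (ρ^2) ^ i) := Real.sqrt_le_sqrt hstep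
  have hv_ub : ‖v‖ ≤ Real.sqrt ((1 - ρ ^ (2*m))⁻¹ *
      ((∑' n, ‖c n‖ ^ 2) - ∑ i ∈ Finset.range m, ‖c i‖ ^ 2)) := by
    rw [EuclideanSpace.norm_eq]
    apply Real.sqrt_le_sqrt
    have key : ∀ s : Fin m, ‖v s‖ ^ 2
        ≤ (1 - ρ ^ (2*m))⁻¹ * ∑' t : ℕ, ‖c ((t+1) * m + s)‖ ^ 2 := by
      intro s
      have he := injective_slice m hm 1 (s:ℕ)
      have h := cs_general c hc h0 h1 (fun t => (t + 1) * m + (s:ℕ)) he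
      refine le_trans (le_of_eq (by rw [hv])) (h.trans ?_)
      apply mul_le_mul_of_nonneg_right _ (tsum_nonneg fun t => sq_nonneg _)
      have hg := geom_slice (ρ^2) (sq_nonneg ρ) (sq_lt_one h0 h1) m hm 1 (s:ℕ)
      calc ∑' t : ℕ, (ρ^2) ^ ((t+1) * m + (s:ℕ)) ≤ (1 - (ρ^2) ^ m)⁻¹ := hg
        _ = (1 - ρ ^ (2*m))⁻¹ := by rw [← pow_mul, Nat.mul_comm]
    calc ∑ s : Fin m, ‖v s‖ ^ 2
        ≤ ∑ s : Fin m, (1 - ρ ^ (2*m))⁻¹ * ∑' t : ℕ, ‖c ((t+1) * m + s)‖ ^ 2 :=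
          Finset.sum_le_sum fun s _ => key s
      _ = (1 - ρ ^ (2*m))⁻¹ *
            ((∑' n, ‖c n‖ ^ 2) - ∑ i ∈ Finset.range m, ‖c i‖ ^ 2) := by
          rw [← Finset.mul_sum, tail_eq c hc m hm]
  calc ρ ^ N * Real.sqrt (∑ n ∈ Finset.range N, ‖c n‖ ^ 2)
      - Real.sqrt ((1 - ρ ^ (2*m))⁻¹ *
          ((∑' n, ‖c n‖ ^ 2) - ∑ i ∈ Finset.range m, ‖c i‖ ^ 2))
      ≤ ‖u‖ - ‖v‖ := by
        apply sub_le_sub hu_lb hv_ub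
    _ ≤ ‖u + v‖ := htri

set_option maxHeartbeats 1000000 in
/-- Two-sided estimate:
`‖f‖_{H²} ≤ sup_k ‖σ_{1-1/k} f‖_k ≤ ‖f‖_{H²}/(1 - e⁻²)^{1/2}` for `f ∈ H²(𝔻)`. -/
theorem two_sided_discrete_norm_estimate (c : ℕ → ℂ)
    (hc : Summable fun n => ‖c n‖ ^ 2)
    (f : ℂ → ℂ) (hf : ∀ z : ℂ, ‖z‖ < 1 → HasSum (fun n => c n * z ^ n) (f z)) :
    Real.sqrt (∑' n, ‖c n‖ ^ 2)
        ≤ (⨆ k : ℕ, Real.sqrt ((1 / ((k : ℝ) + 1)) * ∑ j : Fin (k + 1),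
            ‖f (((1 - 1 / ((k : ℝ) + 1)) : ℂ) * unitRoot (k + 1) j)‖ ^ 2)) ∧
    (⨆ k : ℕ, Real.sqrt ((1 / ((k : ℝ) + 1)) * ∑ j : Fin (k + 1),
        ‖f (((1 - 1 / ((k : ℝ) + 1)) : ℂ) * unitRoot (k + 1) j)‖ ^ 2))
      ≤ Real.sqrt (∑' n, ‖c n‖ ^ 2) / Real.sqrt (1 - Real.exp (-2)) := by
  have hexp1 : Real.exp (-2) < 1 := by
    have h := Real.exp_lt_exp.mpr (show (-2:ℝ) < 0 by norm_num)
    rwa [Real.exp_zero] at h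
  have hexp0 : (0:ℝ) < 1 - Real.exp (-2) := by linarith
  set tot := ∑' n, ‖c n‖ ^ 2 with htot
  have htot0 : 0 ≤ tot := tsum_nonneg fun n => sq_nonneg _
  set L := Real.sqrt tot with hLdef
  set ρ : ℕ → ℝ := fun k => 1 - 1/((k+1 : ℕ):ℝ) with hρdef
  have hρ0 : ∀ k, 0 ≤ ρ k := by
    intro k
    rw [hρdef]
    simp only [sub_nonneg]
    rw [div_le_one (by positivity)]
    exact_mod_cast Nat.one_le_iff_ne_zero.mpr (Nat.succ_ne_zero k)
  have hρ1 : ∀ k, ρ k < 1 := by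
    intro k
    rw [hρdef]
    simp only [sub_lt_self_iff]
    positivity
  set F : ℕ → ℝ := fun k => Real.sqrt ((1 / ((k : ℝ) + 1)) * ∑ j : Fin (k + 1),
      ‖f (((1 - 1 / ((k : ℝ) + 1)) : ℂ) * unitRoot (k + 1) j)‖ ^ 2) with hFdef
  have hFk : ∀ k : ℕ, F k = Real.sqrt (∑ s : Fin (k+1),
      ‖∑' t : ℕ, c (t * (k+1) + s) * ((ρ k : ℝ):ℂ) ^ (t * (k+1) + (s:ℕ))‖ ^ 2) := by
    intro k
    rw [hFdef]
    refine congrArg Real.sqrt ?_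
    have e2 : ((1 - 1 / ((k : ℝ) + 1)) : ℂ) = ((ρ k : ℝ):ℂ) := by
      rw [hρdef]
      push_cast
      ring
    have e1 : (1:ℝ) / ((k : ℝ) + 1) = 1 / (((k+1 : ℕ)):ℝ) := by push_cast; ring
    simp only [e2, e1]
    exact discrete_eq c hc f hf (k+1) (Nat.succ_ne_zero k) (hρ0 k) (hρ1 k)
  have hρpow : ∀ k, (ρ k) ^ (2*(k+1)) ≤ Real.exp (-2) := fun k =>
    rho_pow_le (k+1) (Nat.succ_ne_zero k)
  have hinv : ∀ k, (1 - (ρ k) ^ (2*(k+1)))⁻¹ ≤ (1 - Real.exp (-2))⁻¹ := by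
    intro k
    apply inv_anti₀ hexp0
    linarith [hρpow k]
  have hub : ∀ k, F k ≤ L / Real.sqrt (1 - Real.exp (-2)) := by
    intro k
    rw [hFk k]
    have h1 := discrete_le c hc (k+1) (Nat.succ_ne_zero k) (hρ0 k) (hρ1 k)
    have h2 : ∑ s : Fin (k+1),
        ‖∑' t : ℕ, c (t * (k+1) + s) * ((ρ k : ℝ):ℂ) ^ (t * (k+1) + (s:ℕ))‖ ^ 2
        ≤ (1 - Real.exp (-2))⁻¹ * tot := by
      refine h1.trans ?_
      exact mul_le_mul_of_nonneg_right (hinv k) htot0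
    refine (Real.sqrt_le_sqrt h2).trans ?_
    rw [Real.sqrt_mul (by positivity), Real.sqrt_inv, mul_comm, div_eq_mul_inv]
  have hbdd : BddAbove (Set.range F) := by
    refine ⟨L / Real.sqrt (1 - Real.exp (-2)), ?_⟩
    rintro x ⟨k, rfl⟩
    exact hub k
  constructor
  · -- lower bound
    have hS : ∀ k, F k ≤ ⨆ k, F k := fun k => le_ciSup hbdd k
    have hN : ∀ N : ℕ, Real.sqrt (∑ n ∈ Finset.range N, ‖c n‖ ^ 2) ≤ ⨆ k, F k := by
      intro N
      set P := ∑ n ∈ Finset.range N, ‖c n‖ ^ 2 with hPdef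
      set C := (1 - Real.exp (-2))⁻¹ with hCdef
      set T : ℕ → ℝ := fun m => tot - ∑ i ∈ Finset.range m, ‖c i‖ ^ 2 with hTdef
      have hT0 : ∀ m, 0 ≤ T m := by
        intro m
        rw [hTdef]
        simp only [sub_nonneg]
        exact Summable.sum_le_tsum _ (fun i _ => sq_nonneg _) hc
      have hlow : ∀ k : ℕ, N ≤ k + 1 →
          (ρ k) ^ N * Real.sqrt P - Real.sqrt (C * T (k+1)) ≤ F k := by
        intro k hk
        rw [hFk k]
        have hge := discrete_ge c hc (k+1) (Nat.succ_ne_zero k) (hρ0 k) (hρ1 k) N hk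
        refine le_trans ?_ hge
        apply sub_le_sub_left
        apply Real.sqrt_le_sqrt
        exact mul_le_mul_of_nonneg_right (hinv k) (hT0 (k+1))
      have htendρ : Filter.Tendsto (fun k => (ρ k) ^ N) Filter.atTop (nhds 1) := by
        have h1 : Filter.Tendsto (fun k : ℕ => 1/((k+1:ℕ):ℝ)) Filter.atTop (nhds 0) := by
          have := tendsto_one_div_add_atTop_nhds_zero_nat (𝕜 := ℝ)
          convert this using 2 with k
          push_cast
          ring
        have h2 : Filter.Tendsto ρ Filter.atTop (nhds 1) := by
          have h3 := Filter.Tendsto.const_sub (1:ℝ) h1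
          rw [hρdef]
          simpa using h3
        have := h2.pow N
        simpa using this
      have htendT : Filter.Tendsto (fun k => Real.sqrt (C * T (k+1))) Filter.atTop (nhds 0) := by
        have hpart : Filter.Tendsto (fun m : ℕ => ∑ i ∈ Finset.range m, ‖c i‖ ^ 2)
            Filter.atTop (nhds tot) := hc.hasSum.tendsto_sum_nat
        have hcomp : Filter.Tendsto (fun k : ℕ => ∑ i ∈ Finset.range (k+1), ‖c i‖ ^ 2)
            Filter.atTop (nhds tot) := hpart.comp (Filter.tendsto_add_atTop_nat 1)
        have hT : Filter.Tendsto (fun k => T (k+1)) Filter.atTop (nhds 0) := by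
          have := Filter.Tendsto.const_sub tot hcomp
          simpa [hTdef] using this
        have hCT : Filter.Tendsto (fun k => C * T (k+1)) Filter.atTop (nhds 0) := by
          have := hT.const_mul C
          simpa using this
        have := hCT.sqrt
        simpa using this
      have htend : Filter.Tendsto (fun k => (ρ k) ^ N * Real.sqrt P - Real.sqrt (C * T (k+1)))
          Filter.atTop (nhds (Real.sqrt P)) := by
        have := (htendρ.mul_const (Real.sqrt P)).sub htendT
        simpa using this
      apply le_of_tendsto htend
      filter_upwards [Filter.eventually_ge_atTop N] with k hk
      exact (hlow k (by omega)).trans (hS k)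
    have htendP : Filter.Tendsto (fun N => Real.sqrt (∑ n ∈ Finset.range N, ‖c n‖ ^ 2))
        Filter.atTop (nhds L) := by
      rw [hLdef]
      exact hc.hasSum.tendsto_sum_nat.sqrt
    exact le_of_tendsto htendP (Filter.Eventually.of_forall hN)
  · exact ciSup_le hub
end

section
/- Every Duffin–Schaeffer frame (f_n) for a Hilbert space H is a representing system: if A‖f‖² ≤ Σ |⟨f, f_n⟩|² ≤ B‖f‖² for all f ∈ H with 0 < A ≤ B, then every f ∈ H can be written f = Σ x_n f_n with (x_n) ∈ ℓ², the series converging in H. -/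
open scoped ComplexConjugate

local notation "⟪" x ", " y "⟫" => @inner ℂ _ _ x y

section Aux

variable {H : Type*} [NormedAddCommGroup H] [InnerProductSpace ℂ H] [CompleteSpace H]

/-- Finite synthesis bound: `‖∑_{n∈F} xₙ • fₙ‖² ≤ B ∑_{n∈F} ‖xₙ‖²`. -/
lemma ds_synth_finset_bound (f : ℕ → H) (B : ℝ) (hB : 0 ≤ B)
    (hsum : ∀ v : H, Summable fun n => ‖⟪v, f n⟫‖ ^ 2)
    (hub : ∀ v : H, (∑' n, ‖⟪v, f n⟫‖ ^ 2) ≤ B * ‖v‖ ^ 2)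
    (x : ℕ → ℂ) (F : Finset ℕ) :
    ‖∑ n ∈ F, x n • f n‖ ^ 2 ≤ B * ∑ n ∈ F, ‖x n‖ ^ 2 := by
  set u : H := ∑ n ∈ F, x n • f n with hu
  have hFle : ∑ n ∈ F, ‖⟪u, f n⟫‖ ^ 2 ≤ B * ‖u‖ ^ 2 := by
    refine le_trans ?_ (hub u)
    exact Summable.sum_le_tsum F (fun n _ => by positivity) (hsum u)
  have h1 : (‖u‖ : ℝ) ^ 2 ≤ ∑ n ∈ F, ‖x n‖ * ‖⟪u, f n⟫‖ := by
    have : (‖u‖ : ℝ) ^ 2 = RCLike.re ⟪u, u⟫ := (inner_self_eq_norm_sq u).symm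
    rw [this]
    have h2 : ⟪u, u⟫ = ∑ n ∈ F, x n * ⟪u, f n⟫ := by
      rw [hu, inner_sum]
      exact Finset.sum_congr rfl fun n _ => by rw [inner_smul_right]
    calc RCLike.re ⟪u, u⟫ ≤ ‖⟪u, u⟫‖ := RCLike.re_le_norm _
      _ = ‖∑ n ∈ F, x n * ⟪u, f n⟫‖ := by rw [h2]
      _ ≤ ∑ n ∈ F, ‖x n * ⟪u, f n⟫‖ := norm_sum_le _ _
      _ = ∑ n ∈ F, ‖x n‖ * ‖⟪u, f n⟫‖ := by
          exact Finset.sum_congr rfl fun n _ => norm_mul _ _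
  have hCS : (∑ n ∈ F, ‖x n‖ * ‖⟪u, f n⟫‖) ^ 2
      ≤ (∑ n ∈ F, ‖x n‖ ^ 2) * ∑ n ∈ F, ‖⟪u, f n⟫‖ ^ 2 := by
    exact Finset.sum_mul_sq_le_sq_mul_sq F (fun n => ‖x n‖) (fun n => ‖⟪u, f n⟫‖)
  -- combine
  have hX : (0:ℝ) ≤ ∑ n ∈ F, ‖x n‖ ^ 2 := Finset.sum_nonneg fun n _ => by positivity
  have key : (‖u‖ : ℝ) ^ 4 ≤ (∑ n ∈ F, ‖x n‖ ^ 2) * (B * ‖u‖ ^ 2) := by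
    calc (‖u‖ : ℝ) ^ 4 = ((‖u‖:ℝ) ^ 2) ^ 2 := by ring
      _ ≤ (∑ n ∈ F, ‖x n‖ * ‖⟪u, f n⟫‖) ^ 2 := by
          apply pow_le_pow_left₀ (by positivity) h1
      _ ≤ (∑ n ∈ F, ‖x n‖ ^ 2) * ∑ n ∈ F, ‖⟪u, f n⟫‖ ^ 2 := hCS
      _ ≤ (∑ n ∈ F, ‖x n‖ ^ 2) * (B * ‖u‖ ^ 2) := by
          exact mul_le_mul_of_nonneg_left hFle hX
  rcases eq_or_lt_of_le (norm_nonneg u) with h0 | h0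
  · rw [← h0]
    simpa using mul_nonneg hB hX
  · have hu2 : (0:ℝ) < ‖u‖ ^ 2 := by positivity
    have := (mul_le_mul_iff_of_pos_right hu2).mp (by
      calc ‖u‖ ^ 2 * ‖u‖ ^ 2 = ‖u‖ ^ 4 := by ring
        _ ≤ (∑ n ∈ F, ‖x n‖ ^ 2) * (B * ‖u‖ ^ 2) := key
        _ = ((∑ n ∈ F, ‖x n‖ ^ 2) * B) * ‖u‖ ^ 2 := by ring)
    linarith [this]

/-- The synthesis series converges for `ℓ²` coefficients. -/
lemma ds_synth_summable (f : ℕ → H) (B : ℝ) (hB : 0 ≤ B)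
    (hsum : ∀ v : H, Summable fun n => ‖⟪v, f n⟫‖ ^ 2)
    (hub : ∀ v : H, (∑' n, ‖⟪v, f n⟫‖ ^ 2) ≤ B * ‖v‖ ^ 2)
    (x : ℕ → ℂ) (hx : Summable fun n => ‖x n‖ ^ 2) :
    Summable fun n => x n • f n := by
  rw [summable_iff_vanishing]
  intro e he
  obtain ⟨ε, hε, hball⟩ := Metric.mem_nhds_iff.mp he
  have hx' := (summable_iff_vanishing.mp hx) (Metric.ball 0 (ε ^ 2 / (B + 1)))
    (Metric.ball_mem_nhds 0 (by positivity))
  obtain ⟨s, hs⟩ := hx'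
  refine ⟨s, fun t ht => ?_⟩
  apply hball
  have h1 : ∑ n ∈ t, ‖x n‖ ^ 2 < ε ^ 2 / (B + 1) := by
    have := hs t ht
    rw [Metric.mem_ball, dist_zero_right] at this
    calc ∑ n ∈ t, ‖x n‖ ^ 2 ≤ ‖∑ n ∈ t, ‖x n‖ ^ 2‖ := le_abs_self _
      _ < ε ^ 2 / (B + 1) := this
  have h2 : ‖∑ n ∈ t, x n • f n‖ ^ 2 ≤ B * ∑ n ∈ t, ‖x n‖ ^ 2 :=
    ds_synth_finset_bound f B hB hsum hub x t
  have h3 : ‖∑ n ∈ t, x n • f n‖ ^ 2 < ε ^ 2 := by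
    have hXnn : (0:ℝ) ≤ ∑ n ∈ t, ‖x n‖ ^ 2 := Finset.sum_nonneg fun n _ => by positivity
    calc ‖∑ n ∈ t, x n • f n‖ ^ 2 ≤ B * ∑ n ∈ t, ‖x n‖ ^ 2 := h2
      _ ≤ (B + 1) * ∑ n ∈ t, ‖x n‖ ^ 2 := by nlinarith
      _ < (B + 1) * (ε ^ 2 / (B + 1)) := by
          exact mul_lt_mul_of_pos_left h1 (by positivity)
      _ = ε ^ 2 := by field_simp
  rw [Metric.mem_ball, dist_zero_right]
  nlinarith [norm_nonneg (∑ n ∈ t, x n • f n), hε]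

end Aux

/-- Every Duffin–Schaeffer frame for a Hilbert space is a representing system:
every `v` can be written as `Σ xₙ fₙ` with `(xₙ) ∈ ℓ²`, converging in `H`. -/
theorem duffin_schaeffer_frame_representing
    {H : Type*} [NormedAddCommGroup H] [InnerProductSpace ℂ H] [CompleteSpace H]
    (f : ℕ → H) (hf : ∀ n, f n ≠ 0)
    (A B : ℝ) (hA : 0 < A) (hAB : A ≤ B)
    (hsum : ∀ v : H, Summable fun n => ‖(inner ℂ v (f n) : ℂ)‖ ^ 2)
    (hframe : ∀ v : H,
      A * ‖v‖ ^ 2 ≤ (∑' n, ‖(inner ℂ v (f n) : ℂ)‖ ^ 2) ∧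
      (∑' n, ‖(inner ℂ v (f n) : ℂ)‖ ^ 2) ≤ B * ‖v‖ ^ 2) :
    ∀ v : H, ∃ x : ℕ → ℂ,
      Summable (fun n => ‖x n‖ ^ 2) ∧ HasSum (fun n => x n • f n) v := by
  have hB : (0:ℝ) ≤ B := le_trans hA.le hAB
  have hub : ∀ v : H, (∑' n, ‖⟪v, f n⟫‖ ^ 2) ≤ B * ‖v‖ ^ 2 := fun v => (hframe v).2
  -- coefficients of the frame operator, linear in `v`
  set c : H → ℕ → ℂ := fun v n => ⟪f n, v⟫ with hc
  have hcn : ∀ v n, ‖c v n‖ = ‖⟪v, f n⟫‖ := fun v n => norm_inner_symm _ _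
  have hcsum : ∀ v : H, Summable fun n => ‖c v n‖ ^ 2 := by
    intro v; simpa only [hcn] using hsum v
  have hS : ∀ v : H, Summable fun n => c v n • f n := fun v =>
    ds_synth_summable f B hB hsum hub (c v) (hcsum v)
  -- the frame operator as a plain function first
  set S0 : H → H := fun v => ∑' n, c v n • f n with hS0
  have hSsum : ∀ v : H, HasSum (fun n => c v n • f n) (S0 v) := fun v => (hS v).hasSum
  -- linearity
  have hadd : ∀ v w, S0 (v + w) = S0 v + S0 w := by
    intro v w
    have h1 : HasSum (fun n => c (v + w) n • f n) (S0 v + S0 w) := by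
      have := (hSsum v).add (hSsum w)
      convert this using 2 with n
      simp [hc, inner_add_right, add_smul]
    exact h1.tsum_eq
  have hsmul : ∀ (a : ℂ) v, S0 (a • v) = a • S0 v := by
    intro a v
    have h1 : HasSum (fun n => c (a • v) n • f n) (a • S0 v) := by
      have := (hSsum v).const_smul a
      convert this using 2 with n
      simp [hc, inner_smul_right, smul_smul]
    exact h1.tsum_eq
  -- norm bound : ‖S0 v‖² ≤ B * ∑' ‖c v n‖² ≤ B² ‖v‖²
  have hnorm : ∀ v : H, ‖S0 v‖ ≤ B * ‖v‖ := by
    intro v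
    have htail : ∀ F : Finset ℕ, ‖∑ n ∈ F, c v n • f n‖ ^ 2 ≤ B * ∑' n, ‖c v n‖ ^ 2 := by
      intro F
      refine le_trans (ds_synth_finset_bound f B hB hsum hub (c v) F) ?_
      exact mul_le_mul_of_nonneg_left
        (Summable.sum_le_tsum F (fun n _ => by positivity) (hcsum v)) hB
    have hlim : Filter.Tendsto (fun F : Finset ℕ => ‖∑ n ∈ F, c v n • f n‖ ^ 2)
        Filter.atTop (nhds (‖S0 v‖ ^ 2)) :=
      ((continuous_norm.tendsto (S0 v)).comp (hSsum v)).pow 2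
    have hle : ‖S0 v‖ ^ 2 ≤ B * ∑' n, ‖c v n‖ ^ 2 :=
      le_of_tendsto hlim (Filter.Eventually.of_forall htail)
    have hle2 : ‖S0 v‖ ^ 2 ≤ B * (B * ‖v‖ ^ 2) := by
      refine le_trans hle (mul_le_mul_of_nonneg_left ?_ hB)
      have : (∑' n, ‖c v n‖ ^ 2) = ∑' n, ‖⟪v, f n⟫‖ ^ 2 := by
        exact tsum_congr fun n => by rw [hcn]
      rw [this]; exact hub v
    nlinarith [norm_nonneg (S0 v), norm_nonneg v, mul_nonneg hB (norm_nonneg v)]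
  -- the continuous linear frame operator
  set Slin : H →ₗ[ℂ] H := { toFun := S0, map_add' := hadd, map_smul' := hsmul } with hSlin
  set S : H →L[ℂ] H := LinearMap.mkContinuous Slin B (by intro v; exact hnorm v) with hSdef
  have hSapp : ∀ v, S v = S0 v := fun v => rfl
  -- inner product identity: re ⟪v, S v⟫ = ∑' ‖⟪v, f n⟫‖²
  have hinner : ∀ v : H, ⟪v, S v⟫ = (↑(∑' n, ‖⟪v, f n⟫‖ ^ 2) : ℂ) := by
    intro v
    have h1 : HasSum (fun n => c v n * ⟪v, f n⟫) ⟪v, S0 v⟫ := by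
      simpa using (hSsum v).mapL (innerSL ℂ v)
    have h2 : ∀ n, c v n * ⟪v, f n⟫ = (↑(‖⟪v, f n⟫‖ ^ 2) : ℂ) := by
      intro n
      have hcv : c v n = conj ⟪v, f n⟫ := by
        show (⟪f n, v⟫ : ℂ) = conj ⟪v, f n⟫
        exact (inner_conj_symm (f n) v).symm
      rw [hcv, mul_comm, RCLike.mul_conj]
      norm_cast
    have h3 : HasSum (fun n => (↑(‖⟪v, f n⟫‖ ^ 2) : ℂ)) ⟪v, S0 v⟫ := by
      refine h1.congr_fun fun n => (h2 n).symm
    have h4 : HasSum (fun n => (↑(‖⟪v, f n⟫‖ ^ 2) : ℂ))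
        (↑(∑' n, ‖⟪v, f n⟫‖ ^ 2) : ℂ) :=
      (Complex.hasSum_ofReal).mpr (hsum v).hasSum
    exact h3.unique h4
  -- antilipschitz bound
  have hlow : ∀ v : H, A * ‖v‖ ^ 2 ≤ ‖v‖ * ‖S v‖ := by
    intro v
    have h1 : A * ‖v‖ ^ 2 ≤ RCLike.re ⟪v, S v⟫ := by
      rw [hinner v]
      simpa using (hframe v).1
    calc A * ‖v‖ ^ 2 ≤ RCLike.re ⟪v, S v⟫ := h1
      _ ≤ ‖⟪v, S v⟫‖ := RCLike.re_le_norm _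
      _ ≤ ‖v‖ * ‖S v‖ := norm_inner_le_norm _ _
  have hanti : AntilipschitzWith (A⁻¹).toNNReal S := by
    apply S.antilipschitz_of_bound
    intro v
    rw [Real.coe_toNNReal _ (by positivity)]
    rcases eq_or_lt_of_le (norm_nonneg v) with h0 | h0
    · rw [← h0]; positivity
    · have h2 : A * ‖v‖ ≤ ‖S v‖ := by nlinarith [hlow v, h0]
      calc ‖v‖ = A⁻¹ * (A * ‖v‖) := by field_simp
        _ ≤ A⁻¹ * ‖S v‖ := by
            exact mul_le_mul_of_nonneg_left h2 (by positivity)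
  -- closed range
  have hcl : IsClosed (Set.range S) := hanti.isClosed_range S.uniformContinuous
  set R : Submodule ℂ H := LinearMap.range (S : H →ₗ[ℂ] H) with hR
  have hRset : (R : Set H) = Set.range S := by
    ext y; simp [hR, LinearMap.mem_range]
  have hRcl : IsClosed (R : Set H) := by rw [hRset]; exact hcl
  haveI : CompleteSpace R := hRcl.completeSpace_coe
  -- orthogonal complement of the range is trivial
  have hRbot : Rᗮ = ⊥ := by
    rw [Submodule.eq_bot_iff]
    intro w hw
    have hmem : S w ∈ R := ⟨w, rfl⟩
    have h0 : ⟪S w, w⟫ = 0 := (Submodule.mem_orthogonal R w).mp hw (S w) hmem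
    have h1 : ⟪w, S w⟫ = 0 := by
      rw [← inner_conj_symm, h0, map_zero]
    have h2 : (↑(∑' n, ‖⟪w, f n⟫‖ ^ 2) : ℂ) = 0 := by rw [← hinner w, h1]
    have h3 : (∑' n, ‖⟪w, f n⟫‖ ^ 2) = 0 := by exact_mod_cast h2
    have h4 : A * ‖w‖ ^ 2 ≤ 0 := h3 ▸ (hframe w).1
    have h5 : ‖w‖ ^ 2 = 0 := le_antisymm (by nlinarith) (sq_nonneg _)
    have h6 : ‖w‖ = 0 := by
      exact pow_eq_zero_iff (n := 2) (by norm_num) |>.mp h5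
    exact norm_eq_zero.mp h6
  have hRtop : R = ⊤ := Submodule.orthogonal_eq_bot_iff.mp hRbot
  -- conclusion
  intro v
  have hv : v ∈ R := hRtop ▸ Submodule.mem_top
  obtain ⟨u, hu⟩ := hv
  refine ⟨c u, hcsum u, ?_⟩
  have h : HasSum (fun n => c u n • f n) ((S : H →ₗ[ℂ] H) u) := hSsum u
  rwa [hu] at h
end

section
/- For any function g analytic on a neighborhood of the closed disk of radius r (0 < r < 1) and any k ∈ ℕ, (1/k) Σ_{j=0}^{k−1} |g(r·exp(2πij/k))|² = Σ_{l=0}^∞ | Σ_{m ≡ l mod k} c_m r^m |², where g(z) = Σ c_m z^m; in particular the discrete average over the scaled k-th roots of unity picks out sums of coefficients along arithmetic progressions mod k. -/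
open Complex

noncomputable def zetaC (k : ℕ) : ℂ := Complex.exp (2 * (Real.pi : ℂ) * Complex.I / (k : ℂ))

lemma unitRoot_eq (k j : ℕ) : unitRoot k j = zetaC k ^ j := by
  rw [unitRoot, zetaC, ← Complex.exp_nat_mul]
  ring_nf

lemma zetaC_prim (k : ℕ) (hk : 0 < k) : IsPrimitiveRoot (zetaC k) k :=
  Complex.isPrimitiveRoot_exp k hk.ne'

lemma norm_zetaC (k : ℕ) : ‖zetaC k‖ = 1 := by
  have : (2 * (Real.pi : ℂ) * Complex.I / (k : ℂ)) = ((2 * Real.pi / k : ℝ) : ℂ) * Complex.I := by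
    push_cast; ring
  rw [zetaC, this, Complex.norm_exp_ofReal_mul_I]

lemma ortho (k : ℕ) (hk : 0 < k) (l l' : Fin k) :
    ∑ j ∈ Finset.range k, (zetaC k ^ (l : ℕ) * (starRingEnd ℂ) (zetaC k ^ (l' : ℕ))) ^ j
      = if l = l' then (k : ℂ) else 0 := by
  set ζ := zetaC k with hζdef
  have hζ : IsPrimitiveRoot ζ k := zetaC_prim k hk
  have habs : ‖ζ ^ (l' : ℕ)‖ = 1 := by
    rw [norm_pow]
    have : ‖ζ‖ = 1 := norm_zetaC k
    rw [this, one_pow]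
  have hconj : (starRingEnd ℂ) (ζ ^ (l' : ℕ)) = (ζ ^ (l' : ℕ))⁻¹ :=
    (Complex.inv_eq_conj habs).symm
  have hμ : ζ ^ (l : ℕ) * (starRingEnd ℂ) (ζ ^ (l' : ℕ)) = ζ ^ ((l : ℤ) - (l' : ℤ)) := by
    rw [hconj, zpow_sub₀ (hζ.ne_zero hk.ne')]
    norm_cast
  rw [hμ]
  rcases eq_or_ne l l' with rfl | hne
  · simp
  · rw [if_neg hne]
    have hμne : ζ ^ ((l : ℤ) - (l' : ℤ)) ≠ 1 := by
      intro h1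
      have hdvd := (hζ.zpow_eq_one_iff_dvd _).mp h1
      rcases hdvd with ⟨n, hn⟩
      have hl : ((l : ℕ) : ℤ) < k := by exact_mod_cast l.isLt
      have hl' : ((l' : ℕ) : ℤ) < k := by exact_mod_cast l'.isLt
      have hk0 : (0:ℤ) < k := by exact_mod_cast hk
      have hn0 : n = 0 := by nlinarith [Int.natCast_nonneg (l : ℕ), Int.natCast_nonneg (l' : ℕ)]
      apply hne
      apply Fin.ext
      have : ((l : ℕ) : ℤ) = ((l' : ℕ) : ℤ) := by rw [hn0] at hn; omega
      exact_mod_cast this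
    have hμk : (ζ ^ ((l : ℤ) - (l' : ℤ))) ^ k = 1 := by
      rw [← zpow_natCast (ζ ^ ((l : ℤ) - (l' : ℤ))) k, ← zpow_mul, mul_comm, zpow_mul]
      have : ζ ^ (k : ℤ) = 1 := by
        rw [zpow_natCast]; exact hζ.pow_eq_one
      rw [this, one_zpow]
    rw [geom_sum_eq hμne k, hμk, sub_self, zero_div]

lemma summable_key {c : ℕ → ℂ} {g : ℂ → ℂ} {r R : ℝ} (hr0 : 0 < r) (hrR : r < R)
    (hR : ∀ z : ℂ, ‖z‖ < R → HasSum (fun m => c m * z ^ m) (g z)) :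
    Summable (fun m => ‖c m‖ * r ^ m) := by
  set r' : ℝ := (r + R) / 2 with hr'def
  have h1 : r < r' := by rw [hr'def]; linarith
  have h2 : r' < R := by rw [hr'def]; linarith
  have h3 : 0 < r' := lt_trans hr0 h1
  have hz : ‖((r' : ℝ) : ℂ)‖ < R := by
    rw [Complex.norm_real, Real.norm_eq_abs, abs_of_pos h3]; exact h2
  have hs : Summable (fun m => c m * ((r' : ℝ) : ℂ) ^ m) := (hR _ hz).summable
  have hb : Filter.Tendsto (fun m => ‖c m * ((r' : ℝ) : ℂ) ^ m‖) Filter.atTop (nhds 0) := by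
    simpa using hs.tendsto_atTop_zero.norm
  obtain ⟨C, hC⟩ := hb.bddAbove_range
  have hnorm : ∀ m, ‖c m * ((r' : ℝ) : ℂ) ^ m‖ = ‖c m‖ * r' ^ m := by
    intro m
    rw [norm_mul, norm_pow, Complex.norm_real, Real.norm_eq_abs, abs_of_pos h3]
  have hCle : ∀ m, ‖c m‖ * r' ^ m ≤ C := by
    intro m
    rw [← hnorm]
    exact hC (Set.mem_range_self m)
  have hq : 0 ≤ r / r' := le_of_lt (div_pos hr0 h3)
  have hq1 : r / r' < 1 := (div_lt_one h3).mpr h1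
  apply Summable.of_nonneg_of_le
    (fun m => mul_nonneg (norm_nonneg _) (le_of_lt (pow_pos hr0 m)))
    (fun m => ?_) ((summable_geometric_of_lt_one hq hq1).mul_left C)
  have hrm : r ^ m = r' ^ m * (r / r') ^ m := by
    rw [div_pow r r' m, mul_div_cancel₀ _ (pow_ne_zero m h3.ne')]
  rw [hrm, ← mul_assoc]
  exact mul_le_mul_of_nonneg_right (hCle m) (pow_nonneg hq m)

def fiberEquiv (k : ℕ) (hk : 0 < k) (l : Fin k) :
    {m : ℕ // m % k = (l : ℕ)} ≃ ((fun m : ℕ => (⟨m % k, Nat.mod_lt m hk⟩ : Fin k)) ⁻¹' {l}) :=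
  Equiv.subtypeEquivRight (fun m => by
    simp [Set.mem_preimage, Set.mem_singleton_iff, Fin.ext_iff])

@[simp] lemma fiberEquiv_coe (k : ℕ) (hk : 0 < k) (l : Fin k)
    (m : {m : ℕ // m % k = (l : ℕ)}) : ((fiberEquiv k hk l m : ℕ)) = (m : ℕ) := rfl

/-- For `g` analytic on a neighborhood of the closed disk of radius `r` with
Taylor coefficients `c`, the discrete average over the scaled `k`-th roots of
unity picks out sums of coefficients along arithmetic progressions mod `k`:
`(1/k) Σ_j |g(r ω_k^j)|² = Σ_l |Σ_{m ≡ l [k]} c_m r^m|²`. -/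
theorem discrete_average_arithmetic_progressions
    (c : ℕ → ℂ) (g : ℂ → ℂ) (r : ℝ) (hr0 : 0 < r) (hr1 : r < 1)
    (hg : ∃ R : ℝ, r < R ∧ ∀ z : ℂ, ‖z‖ < R → HasSum (fun m => c m * z ^ m) (g z))
    (k : ℕ) (hk : 0 < k) :
    (1 / (k : ℝ)) * ∑ j : Fin k, ‖g ((r : ℂ) * unitRoot k j)‖ ^ 2
      = ∑ l : Fin k, ‖∑' m : {m : ℕ // m % k = (l : ℕ)}, c m * (r : ℂ) ^ (m : ℕ)‖ ^ 2 := by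
  obtain ⟨R, hrR, hR⟩ := hg
  have hζ : IsPrimitiveRoot (zetaC k) k := zetaC_prim k hk
  set ζ : ℂ := zetaC k with hζdef
  set f : ℕ → ℂ := fun m => c m * (r : ℂ) ^ m with hfdef
  set a : Fin k → ℂ := fun l => ∑' m : {m : ℕ // m % k = (l : ℕ)}, f m with hadef
  -- Step A
  have stepA : ∀ j : ℕ, g ((r : ℂ) * ζ ^ j) = ∑ l : Fin k, a l * (ζ ^ j) ^ (l : ℕ) := by
    intro j
    have hznorm : ‖(r : ℂ) * ζ ^ j‖ < R := by
      rw [norm_mul, norm_pow, Complex.norm_real, norm_zetaC, one_pow, mul_one,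
        Real.norm_eq_abs, abs_of_pos hr0]
      exact hrR
    have hgz := hR _ hznorm
    have hterm : (fun m => c m * ((r : ℂ) * ζ ^ j) ^ m)
        = fun m => f m * (ζ ^ j) ^ (m % k) := by
      funext m
      have h1 : (ζ ^ j) ^ m = (ζ ^ j) ^ (m % k) := by
        conv_lhs => rw [← Nat.mod_add_div m k]
        rw [pow_add, pow_mul]
        have h2 : (ζ ^ j) ^ k = 1 := by
          rw [← pow_mul, mul_comm, pow_mul, hζ.pow_eq_one, one_pow]
        rw [h2, one_pow, mul_one]
      rw [mul_pow, hfdef, ← h1]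
      ring
    rw [hterm] at hgz
    have hfib := hgz.tsum_fiberwise (fun m => (⟨m % k, Nat.mod_lt m hk⟩ : Fin k))
    have hsum := ((hasSum_fintype
      (fun l : Fin k => ∑' m : (fun m => (⟨m % k, Nat.mod_lt m hk⟩ : Fin k)) ⁻¹' {l},
        f m * (ζ ^ j) ^ ((m : ℕ) % k))).unique hfib)
    rw [← hsum]
    apply Finset.sum_congr rfl
    intro l _
    rw [← (fiberEquiv k hk l).tsum_eq (fun m => f (m : ℕ) * (ζ ^ j) ^ ((m : ℕ) % k))]
    have : ∀ m : {m : ℕ // m % k = (l : ℕ)},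
        f ((fiberEquiv k hk l m : ℕ)) * (ζ ^ j) ^ (((fiberEquiv k hk l m : ℕ)) % k) = f (m : ℕ) * (ζ ^ j) ^ (l : ℕ) := by
      intro m
      have hco : ((fiberEquiv k hk l m : ℕ)) = (m : ℕ) := fiberEquiv_coe k hk l m
      rw [hco, m.2]
    rw [tsum_congr this, tsum_mul_right]
  -- Step B : Parseval
  set S : Fin k → ℂ := fun j => ∑ l : Fin k, a l * (ζ ^ (j : ℕ)) ^ (l : ℕ) with hSdef
  have expand : ∀ j : Fin k, S j * (starRingEnd ℂ) (S j)
      = ∑ l : Fin k, ∑ l' : Fin k,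
          (a l * (starRingEnd ℂ) (a l')) * ((ζ ^ (l : ℕ) * (starRingEnd ℂ) (ζ ^ (l' : ℕ))) ^ (j : ℕ)) := by
    intro j
    rw [hSdef]
    simp only [map_sum, Finset.sum_mul_sum, map_mul]
    apply Finset.sum_congr rfl; intro l _
    apply Finset.sum_congr rfl; intro l' _
    have h1 : (ζ ^ (j : ℕ)) ^ (l : ℕ) = (ζ ^ (l : ℕ)) ^ (j : ℕ) := by
      rw [← pow_mul, ← pow_mul, Nat.mul_comm]
    have h2 : (starRingEnd ℂ) ((ζ ^ (j : ℕ)) ^ (l' : ℕ))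
        = ((starRingEnd ℂ) (ζ ^ (l' : ℕ))) ^ (j : ℕ) := by
      rw [← map_pow, ← pow_mul, Nat.mul_comm, pow_mul, map_pow]
    rw [h1, h2, mul_pow]
    ring
  have key : ∑ j : Fin k, S j * (starRingEnd ℂ) (S j)
      = (k : ℂ) * ∑ l : Fin k, a l * (starRingEnd ℂ) (a l) := by
    calc ∑ j : Fin k, S j * (starRingEnd ℂ) (S j)
        = ∑ j : Fin k, ∑ l : Fin k, ∑ l' : Fin k,
            (a l * (starRingEnd ℂ) (a l')) * ((ζ ^ (l : ℕ) * (starRingEnd ℂ) (ζ ^ (l' : ℕ))) ^ (j : ℕ)) := by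
          exact Finset.sum_congr rfl (fun j _ => expand j)
      _ = ∑ l : Fin k, ∑ l' : Fin k,
            (a l * (starRingEnd ℂ) (a l')) * ∑ j : Fin k, ((ζ ^ (l : ℕ) * (starRingEnd ℂ) (ζ ^ (l' : ℕ))) ^ (j : ℕ)) := by
          rw [Finset.sum_comm]
          apply Finset.sum_congr rfl; intro l _
          rw [Finset.sum_comm]
          apply Finset.sum_congr rfl; intro l' _
          rw [Finset.mul_sum]
      _ = ∑ l : Fin k, ∑ l' : Fin k,
            (a l * (starRingEnd ℂ) (a l')) * (if l = l' then (k : ℂ) else 0) := by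
          apply Finset.sum_congr rfl; intro l _
          apply Finset.sum_congr rfl; intro l' _
          rw [← ortho k hk l l', Fin.sum_univ_eq_sum_range]
      _ = (k : ℂ) * ∑ l : Fin k, a l * (starRingEnd ℂ) (a l) := by
          rw [Finset.mul_sum]
          apply Finset.sum_congr rfl; intro l _
          simp only [mul_ite, mul_zero]
          rw [Finset.sum_ite_eq]
          simp [mul_comm]
  -- convert to real statement
  have habs2 : ∀ z : ℂ, ‖z‖ ^ 2 = (z * (starRingEnd ℂ) z).re := by
    intro z
    rw [Complex.mul_conj, Complex.ofReal_re, ← Complex.sq_norm]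
  have hreal : ∑ j : Fin k, ‖S j‖ ^ 2 = (k : ℝ) * ∑ l : Fin k, ‖a l‖ ^ 2 := by
    calc ∑ j : Fin k, ‖S j‖ ^ 2
        = ∑ j : Fin k, (S j * (starRingEnd ℂ) (S j)).re :=
          Finset.sum_congr rfl (fun j _ => habs2 (S j))
      _ = (∑ j : Fin k, S j * (starRingEnd ℂ) (S j)).re := (Complex.re_sum _ _).symm
      _ = ((k : ℂ) * ∑ l : Fin k, a l * (starRingEnd ℂ) (a l)).re := by rw [key]
      _ = (k : ℝ) * (∑ l : Fin k, a l * (starRingEnd ℂ) (a l)).re := by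
          rw [show ((k : ℕ) : ℂ) = (((k : ℕ) : ℝ) : ℂ) by norm_cast, Complex.re_ofReal_mul]
      _ = (k : ℝ) * ∑ l : Fin k, ‖a l‖ ^ 2 := by
          rw [Complex.re_sum]
          exact congrArg _ (Finset.sum_congr rfl (fun l _ => (habs2 (a l)).symm))
  -- assemble
  have hgval : ∀ j : Fin k, g ((r : ℂ) * unitRoot k (j : ℕ)) = S j := by
    intro j
    rw [unitRoot_eq]
    exact stepA (j : ℕ)
  calc (1 / (k : ℝ)) * ∑ j : Fin k, ‖g ((r : ℂ) * unitRoot k j)‖ ^ 2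
      = (1 / (k : ℝ)) * ∑ j : Fin k, ‖S j‖ ^ 2 := by
        rw [Finset.sum_congr rfl (fun j _ => by rw [hgval j])]
    _ = (1 / (k : ℝ)) * ((k : ℝ) * ∑ l : Fin k, ‖a l‖ ^ 2) := by rw [hreal]
    _ = ∑ l : Fin k, ‖a l‖ ^ 2 := by
        have hk0 : (k : ℝ) ≠ 0 := Nat.cast_ne_zero.mpr hk.ne'
        field_simp
    _ = ∑ l : Fin k, ‖∑' m : {m : ℕ // m % k = (l : ℕ)}, c m * (r : ℂ) ^ (m : ℕ)‖ ^ 2 := rfl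
end
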